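/- arXiv:1805.08383 — 2 statements merged into one kernel-verified Lean document; each statement's English description precedes it below -/
import Mathlib

section
/- Let M ∈ GL_n(E) be a semisimple matrix over a number field E with characteristic polynomial P(T), let S be the Zariski closure of the cyclic group generated by M, and T the identity component of S. Suppose for each real embedding E → R, some nonzero integral power of det(M) equals some nonzero integral power of |i(α)| for every root α of P(T) and every complex embedding i extending E → R. Then the torus (T ∩ SL_{n,E})° is anisotropic at every real place of E. -/
open Matrix
open scoped MatrixGroups

noncomputable section

/-- The Zariski topology on `n × n` matrices over a commutative ring: generated by
complements of zero sets of polynomials in the entries. -/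
def zariskiMatrix (n : ℕ) (R : Type) [CommRing R] :
    TopologicalSpace (Matrix (Fin n) (Fin n) R) :=
  TopologicalSpace.generateFrom
    {s | ∃ p : MvPolynomial (Fin n × Fin n) R,
      s = {A | MvPolynomial.eval (fun q => A q.1 q.2) p ≠ 0}}

/-- The Zariski topology on `GL n R`, induced from the embedding `g ↦ (g, g⁻¹)` into
pairs of matrices. -/
def zariskiGL (n : ℕ) (R : Type) [CommRing R] : TopologicalSpace (GL (Fin n) R) :=
  TopologicalSpace.induced
    (fun g => ((g : Matrix (Fin n) (Fin n) R),
      ((g⁻¹ : GL (Fin n) R) : Matrix (Fin n) (Fin n) R)))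
    (@instTopologicalSpaceProd _ _ (zariskiMatrix n R) (zariskiMatrix n R))

/-- Zariski-closed subset of `GL n R`. -/
def IsZClosedSet {n : ℕ} {R : Type} [CommRing R] (s : Set (GL (Fin n) R)) : Prop :=
  @IsClosed _ (zariskiGL n R) s

/-- Zariski closure of a subset of `GL n R`. -/
def zClosureSet {n : ℕ} {R : Type} [CommRing R] (s : Set (GL (Fin n) R)) :
    Set (GL (Fin n) R) :=
  @closure _ (zariskiGL n R) s

/-- Zariski-(pre)connectedness for a subset of `GL n R`. -/
def IsZConnectedSet {n : ℕ} {R : Type} [CommRing R] (s : Set (GL (Fin n) R)) : Prop :=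
  @IsPreconnected _ (zariskiGL n R) s

/-- A subgroup of `GL n R` is Zariski closed. -/
def IsClosedSub {n : ℕ} {R : Type} [CommRing R] (H : Subgroup (GL (Fin n) R)) : Prop :=
  IsZClosedSet (H : Set (GL (Fin n) R))

/-- A subgroup of `GL n R` is Zariski connected. -/
def IsConnectedSub {n : ℕ} {R : Type} [CommRing R] (H : Subgroup (GL (Fin n) R)) : Prop :=
  IsZConnectedSet (H : Set (GL (Fin n) R))

/-- Zariski closure of a subgroup: the smallest Zariski-closed subgroup containing it. -/
def zClosureSub {n : ℕ} {R : Type} [CommRing R] (H : Subgroup (GL (Fin n) R)) :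
    Subgroup (GL (Fin n) R) :=
  sInf {K : Subgroup (GL (Fin n) R) | IsClosedSub K ∧ H ≤ K}

/-- Entrywise map `GL n R →* GL n S` along a ring homomorphism (base change). -/
def mapGL {n : ℕ} {R S : Type} [CommRing R] [CommRing S] (f : R →+* S) :
    GL (Fin n) R →* GL (Fin n) S :=
  Units.map (RingHom.mapMatrix f).toMonoidHom

/-- A subgroup all of whose elements are unipotent matrices. -/
def IsUnipotentSub {n : ℕ} {R : Type} [CommRing R] (H : Subgroup (GL (Fin n) R)) : Prop :=
  ∀ g ∈ H, ((g : Matrix (Fin n) (Fin n) R) - 1) ^ n = 0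

/-- Reductivity: every Zariski-closed connected normal unipotent subgroup is trivial
(i.e. the unipotent radical is trivial). -/
def IsReductiveSub {n : ℕ} {F : Type} [Field F] (G : Subgroup (GL (Fin n) F)) : Prop :=
  ∀ U : Subgroup (GL (Fin n) F), U ≤ G → IsClosedSub U → IsConnectedSub U →
    (∀ g ∈ G, ∀ u ∈ U, g * u * g⁻¹ ∈ U) → IsUnipotentSub U → U = ⊥

/-- A subtorus of `GL n F`: Zariski closed, connected, and simultaneously diagonalizable
over some field extension. -/
def IsSubtorus {n : ℕ} {F : Type} [Field F] (T : Subgroup (GL (Fin n) F)) : Prop :=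
  IsClosedSub T ∧ IsConnectedSub T ∧
    ∃ (K : Type) (_ : Field K) (_ : Algebra F K) (u : GL (Fin n) K),
      ∀ t ∈ T,
        (((u * mapGL (algebraMap F K) t * u⁻¹ : GL (Fin n) K) :
          Matrix (Fin n) (Fin n) K)).IsDiag

/-- `T` is a maximal torus of `G`. -/
def IsMaximalTorusOf {n : ℕ} {F : Type} [Field F] (T G : Subgroup (GL (Fin n) F)) : Prop :=
  IsSubtorus T ∧ T ≤ G ∧
    ∀ T' : Subgroup (GL (Fin n) F), IsSubtorus T' → T' ≤ G → T ≤ T' → T' = T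

/-- The tautological representation of a subgroup of `GL n F` is irreducible. -/
def IrreducibleOn {n : ℕ} {F : Type} [Field F] (G : Subgroup (GL (Fin n) F)) : Prop :=
  ∀ W : Submodule F (Fin n → F),
    (∀ g ∈ G, ∀ w ∈ W, (g : Matrix (Fin n) (Fin n) F).mulVec w ∈ W) → W = ⊥ ∨ W = ⊤

/-- Absolute irreducibility: irreducible after any field extension. -/
def AbsolutelyIrreducibleOn {n : ℕ} {F : Type} [Field F]
    (G : Subgroup (GL (Fin n) F)) : Prop :=
  ∀ (K : Type) (_ : Field K) (_ : Algebra F K),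
    IrreducibleOn (Subgroup.map (mapGL (n := n) (algebraMap F K)) G)

/-- The central subgroup of scalar matrices `𝔾ₘ ⊆ GL n F`. -/
def scalarSub (n : ℕ) (F : Type) [Field F] : Subgroup (GL (Fin n) F) :=
  (Units.map (algebraMap F (Matrix (Fin n) (Fin n) F)).toMonoidHom).range

/-- The (algebraic) derived subgroup: the Zariski closure of the commutator subgroup. -/
def algDerivedSub {n : ℕ} {F : Type} [Field F] (G : Subgroup (GL (Fin n) F)) :
    Subgroup (GL (Fin n) F) :=
  zClosureSub ⁅G, G⁆

/-- The identity component of a subgroup: the largest connected subgroup contained in it. -/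
def idCompSub {n : ℕ} {F : Type} [Field F] (H : Subgroup (GL (Fin n) F)) :
    Subgroup (GL (Fin n) F) :=
  sSup {K : Subgroup (GL (Fin n) F) | K ≤ H ∧ IsConnectedSub K}


/-- The regular function `t ↦ p(t) / det(t)^k` on `GL n F`; every algebraic character of a
closed subgroup of `GL n F` is of this form. -/
def regFunGL {n : ℕ} {F : Type} [Field F] (p : MvPolynomial (Fin n × Fin n) F) (k : ℕ)
    (t : GL (Fin n) F) : F :=
  MvPolynomial.eval (fun q : Fin n × Fin n => (t : Matrix (Fin n) (Fin n) F) q.1 q.2) p /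
    ((t : Matrix (Fin n) (Fin n) F).det) ^ k

/-- A subgroup of `GL n F` is anisotropic: it admits no nontrivial algebraic
(regular, nowhere-vanishing, multiplicative) character. -/
def IsAnisoSub {n : ℕ} {F : Type} [Field F] (H : Subgroup (GL (Fin n) F)) : Prop :=
  ∀ (p : MvPolynomial (Fin n × Fin n) F) (k : ℕ),
    (∀ t ∈ H, regFunGL p k t ≠ 0) →
    (∀ s ∈ H, ∀ t ∈ H, regFunGL p k (s * t) = regFunGL p k s * regFunGL p k t) →
    ∀ t ∈ H, regFunGL p k t = 1

section AuxLemmas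

theorem isZClosed_eval_zero {n : ℕ} {R : Type} [CommRing R]
    (Q : MvPolynomial (Fin n × Fin n) R) :
    IsZClosedSet {g : GL (Fin n) R |
      MvPolynomial.eval (fun q => (g : Matrix (Fin n) (Fin n) R) q.1 q.2) Q = 0} := by
  have h1 : @IsOpen _ (zariskiMatrix n R)
      {A : Matrix (Fin n) (Fin n) R | MvPolynomial.eval (fun q => A q.1 q.2) Q ≠ 0} :=
    TopologicalSpace.isOpen_generateFrom_of_mem ⟨Q, rfl⟩
  have h2 : @IsClosed _ (zariskiMatrix n R)
      {A : Matrix (Fin n) (Fin n) R | MvPolynomial.eval (fun q => A q.1 q.2) Q = 0} := by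
    have he : {A : Matrix (Fin n) (Fin n) R | MvPolynomial.eval (fun q => A q.1 q.2) Q = 0}
        = {A : Matrix (Fin n) (Fin n) R | MvPolynomial.eval (fun q => A q.1 q.2) Q ≠ 0}ᶜ := by
      ext A; simp
    rw [he]
    exact @IsOpen.isClosed_compl _ (zariskiMatrix n R) _ h1
  have h3 : @IsClosed _
      (@instTopologicalSpaceProd _ _ (zariskiMatrix n R) (zariskiMatrix n R))
      ({A : Matrix (Fin n) (Fin n) R | MvPolynomial.eval (fun q => A q.1 q.2) Q = 0} ×ˢ
        (Set.univ : Set (Matrix (Fin n) (Fin n) R))) :=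
    @IsClosed.prod _ _ (zariskiMatrix n R) (zariskiMatrix n R) _ _ h2
      (@isClosed_univ _ (zariskiMatrix n R))
  have h4 : @Continuous _ _ (zariskiGL n R)
      (@instTopologicalSpaceProd _ _ (zariskiMatrix n R) (zariskiMatrix n R))
      (fun g : GL (Fin n) R => ((g : Matrix (Fin n) (Fin n) R),
        ((g⁻¹ : GL (Fin n) R) : Matrix (Fin n) (Fin n) R))) := continuous_induced_dom
  have h5 := @IsClosed.preimage _ _ (zariskiGL n R)
      (@instTopologicalSpaceProd _ _ (zariskiMatrix n R) (zariskiMatrix n R)) _ h4 _ h3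
  unfold IsZClosedSet
  convert h5 using 1
  ext g
  simp [Set.mem_prod]

theorem eval_comp_eq_zero_iff {E : Type} [Field E] {σ : Type} (i : E →+* ℂ)
    (F : MvPolynomial σ ℂ) :
    ∃ (ι : Type) (P : ι → MvPolynomial σ E), ∀ x : σ → E,
      (MvPolynomial.eval (fun s => i (x s)) F = 0 ↔
        ∀ t, MvPolynomial.eval x (P t) = 0) := by
  letI : Algebra E ℂ := i.toAlgebra
  let b := Module.Basis.ofVectorSpace E ℂ
  refine ⟨_, fun t => F.support.sum
    (fun m => MvPolynomial.monomial m (b.repr (F.coeff m) t)), fun x => ?_⟩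
  have key : MvPolynomial.eval (fun s => i (x s)) F =
      F.support.sum (fun m => (m.prod fun s e => x s ^ e) • (F.coeff m)) := by
    rw [MvPolynomial.eval_eq]
    refine Finset.sum_congr rfl fun m _ => ?_
    rw [Algebra.smul_def]
    rw [mul_comm]
    congr 1
    show _ = i (m.prod fun s e => x s ^ e)
    rw [Finsupp.prod, map_prod]
    exact Finset.prod_congr rfl fun s _ => by rw [map_pow]
  have hrepr : ∀ t, b.repr (MvPolynomial.eval (fun s => i (x s)) F) t =
      MvPolynomial.eval x (F.support.sum
        (fun m => MvPolynomial.monomial m (b.repr (F.coeff m) t))) := by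
    intro t
    rw [key, map_sum, Finsupp.coe_finset_sum, Finset.sum_apply, map_sum]
    refine Finset.sum_congr rfl fun m _ => ?_
    rw [_root_.map_smul, Finsupp.smul_apply, MvPolynomial.eval_monomial, smul_eq_mul, mul_comm]
  constructor
  · intro h t
    rw [← hrepr, h, map_zero]; rfl
  · intro h
    have : b.repr (MvPolynomial.eval (fun s => i (x s)) F) = 0 := by
      ext t; rw [hrepr t, h t]; rfl
    simpa using (b.repr.map_eq_zero_iff).mp this

theorem isZClosed_eval_comp {n : ℕ} {E : Type} [Field E] (i : E →+* ℂ)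
    (F : MvPolynomial (Fin n × Fin n) ℂ) :
    IsZClosedSet {g : GL (Fin n) E |
      MvPolynomial.eval (fun q => i ((g : Matrix (Fin n) (Fin n) E) q.1 q.2)) F = 0} := by
  obtain ⟨ι, P, hP⟩ := eval_comp_eq_zero_iff i F
  have he : {g : GL (Fin n) E |
      MvPolynomial.eval (fun q => i ((g : Matrix (Fin n) (Fin n) E) q.1 q.2)) F = 0}
      = ⋂ t : ι, {g : GL (Fin n) E |
        MvPolynomial.eval (fun q => (g : Matrix (Fin n) (Fin n) E) q.1 q.2) (P t) = 0} := by
    ext g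
    simp only [Set.mem_setOf_eq, Set.mem_iInter]
    exact hP _
  rw [IsZClosedSet, he]
  exact @isClosed_iInter _ _ (zariskiGL n E) _ (fun t => isZClosed_eval_zero (P t))

noncomputable def detPoly (n : ℕ) (R : Type) [CommRing R] :
    MvPolynomial (Fin n × Fin n) R :=
  (Matrix.mvPolynomialX (Fin n) (Fin n) R).det

theorem eval_detPoly {n : ℕ} {R : Type} [CommRing R] (A : Matrix (Fin n) (Fin n) R) :
    MvPolynomial.eval (fun q => A q.1 q.2) (detPoly n R) = A.det := by
  rw [detPoly, RingHom.map_det, Matrix.mvPolynomialX_mapMatrix_eval]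

theorem le_zClosureSub {n : ℕ} {R : Type} [CommRing R] (H : Subgroup (GL (Fin n) R)) :
    H ≤ zClosureSub H :=
  le_sInf fun _ hK => hK.2

theorem isClosedSub_zClosureSub {n : ℕ} {R : Type} [CommRing R] (H : Subgroup (GL (Fin n) R)) :
    IsClosedSub (zClosureSub H) := by
  rw [IsClosedSub, IsZClosedSet, zClosureSub, Subgroup.coe_sInf]
  exact @isClosed_biInter _ _ (zariskiGL n R) _ _ (fun K hK => hK.1)

theorem zClosureSub_le {n : ℕ} {R : Type} [CommRing R] {H K : Subgroup (GL (Fin n) R)}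
    (hK : IsClosedSub K) (h : H ≤ K) : zClosureSub H ≤ K :=
  sInf_le ⟨hK, h⟩

theorem idCompSub_le {n : ℕ} {F : Type} [Field F] (H : Subgroup (GL (Fin n) F)) :
    idCompSub H ≤ H :=
  sSup_le fun _ hK => hK.1

theorem map_aeval_matrix {n : ℕ} {E F : Type} [Field E] [Field F] (i : E →+* F)
    (A : Matrix (Fin n) (Fin n) E) (r : Polynomial E) :
    (Polynomial.aeval A r).map i = Polynomial.aeval (A.map i) (r.map i) := by
  show i.mapMatrix (Polynomial.aeval A r) = _
  rw [Polynomial.aeval_def, Polynomial.hom_eval₂, Polynomial.aeval_def, Polynomial.eval₂_map]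
  have hring : (i.mapMatrix : Matrix (Fin n) (Fin n) E →+* Matrix (Fin n) (Fin n) F).comp
      (algebraMap E (Matrix (Fin n) (Fin n) E))
      = (algebraMap F (Matrix (Fin n) (Fin n) F)).comp i := by
    refine RingHom.ext fun e => ?_
    show i.mapMatrix (algebraMap E _ e) = algebraMap F _ (i e)
    ext k j
    simp [Matrix.algebraMap_eq_diagonal, Matrix.map_apply, Matrix.diagonal_apply, apply_ite i]
  rw [hring]
  rfl

theorem exists_diag {n : ℕ} {E : Type} [Field E] [CharZero E] (i : E →+* ℂ)
    (Mm : Matrix (Fin n) (Fin n) E)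
    (hss : Module.End.IsSemisimple (Matrix.mulVecLin Mm)) :
    ∃ (U W : Matrix (Fin n) (Fin n) ℂ) (d : Fin n → ℂ),
      U * W = 1 ∧ W * U = 1 ∧ (Mm.map i) * U = U * Matrix.diagonal d ∧
      ∀ l, (Polynomial.map i Mm.charpoly).IsRoot (d l) := by
  classical
  set N₀ : Matrix (Fin n) (Fin n) ℂ := Mm.map i with hN₀
  have hMvE : (Matrix.toLinAlgEquiv' Mm : Module.End E (Fin n → E)) = Matrix.mulVecLin Mm :=
    LinearMap.ext fun w => by rw [Matrix.toLinAlgEquiv'_apply]; rfl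
  have hq : Squarefree (minpoly E (Matrix.mulVecLin Mm)) := hss.minpoly_squarefree
  set q := minpoly E (Matrix.mulVecLin Mm) with hqdef
  have haevalq : Polynomial.aeval Mm q = 0 := by
    have h1 : Polynomial.aeval (Matrix.toLinAlgEquiv' Mm) q = 0 := by
      rw [hMvE]; exact minpoly.aeval E _
    have key := Polynomial.aeval_algHom_apply
      (Matrix.toLinAlgEquiv' : Matrix (Fin n) (Fin n) E ≃ₐ[E] _).toAlgHom Mm q
    have h2 : (Matrix.toLinAlgEquiv' : Matrix (Fin n) (Fin n) E ≃ₐ[E] _)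
        (Polynomial.aeval Mm q) = 0 := by
      have h3 : Polynomial.aeval
          ((Matrix.toLinAlgEquiv' : Matrix (Fin n) (Fin n) E ≃ₐ[E] _).toAlgHom Mm) q = 0 := h1
      rw [key] at h3
      exact h3
    exact (map_eq_zero_iff _ (AlgEquiv.injective _)).mp h2
  have hqsf : Squarefree (q.map i) :=
    (((PerfectField.separable_iff_squarefree).mpr hq).map).squarefree
  set fC : Module.End ℂ (Fin n → ℂ) := Matrix.toLinAlgEquiv' N₀ with hfC
  have haevalfC : ∀ r : Polynomial E, Polynomial.aeval Mm r = 0 →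
      Polynomial.aeval fC (r.map i) = 0 := by
    intro r hr
    have key := Polynomial.aeval_algHom_apply
      (Matrix.toLinAlgEquiv' : Matrix (Fin n) (Fin n) ℂ ≃ₐ[ℂ] _).toAlgHom N₀ (r.map i)
    show Polynomial.aeval
      ((Matrix.toLinAlgEquiv' : Matrix (Fin n) (Fin n) ℂ ≃ₐ[ℂ] _).toAlgHom N₀) (r.map i) = 0
    rw [key, ← map_aeval_matrix i Mm r, hr, Matrix.map_zero i (map_zero i), map_zero]
  have hfss : fC.IsSemisimple :=
    Module.End.isSemisimple_of_squarefree_aeval_eq_zero hqsf (haevalfC q haevalq)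
  have htop : ⨆ μ : ℂ, fC.eigenspace μ = ⊤ := by
    have h1 := Module.End.iSup_maxGenEigenspace_eq_top fC
    have h2 : ∀ μ : ℂ, fC.maxGenEigenspace μ = fC.eigenspace μ := fun μ =>
      hfss.isFinitelySemisimple.maxGenEigenspace_eq_eigenspace μ
    simpa only [h2] using h1
  have hInd := Module.End.eigenspaces_iSupIndep fC
  have hInternal := DirectSum.isInternal_submodule_of_iSupIndep_of_iSup_eq_top hInd htop
  let vB : ∀ μ : ℂ, Module.Basis _ ℂ (fC.eigenspace μ) := fun μ => Module.Basis.ofVectorSpace ℂ _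
  let b0 := hInternal.collectedBasis vB
  let e := b0.indexEquiv (Pi.basisFun ℂ (Fin n))
  let c := b0.reindex e
  let d : Fin n → ℂ := fun j => (e.symm j).1
  have hc : ∀ j, (c j) ∈ fC.eigenspace (d j) := by
    intro j
    rw [show c j = b0 (e.symm j) from b0.reindex_apply e j]
    exact hInternal.collectedBasis_mem vB (e.symm j)
  have hceq : ∀ j, N₀.mulVec (c j) = d j • (c j) := by
    intro j
    have h := Module.End.mem_eigenspace_iff.mp (hc j)
    rwa [hfC, Matrix.toLinAlgEquiv'_apply] at h
  refine ⟨(Pi.basisFun ℂ (Fin n)).toMatrix c, c.toMatrix (Pi.basisFun ℂ (Fin n)), d,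
    Module.Basis.toMatrix_mul_toMatrix_flip _ _, Module.Basis.toMatrix_mul_toMatrix_flip _ _, ?_, ?_⟩
  · ext k j
    have hU : ∀ l j', (Pi.basisFun ℂ (Fin n)).toMatrix c l j' = c j' l := fun l j' => by
      rw [Module.Basis.toMatrix_apply, Pi.basisFun_repr]
    rw [Matrix.mul_apply, Matrix.mul_diagonal]
    calc ∑ l, N₀ k l * (Pi.basisFun ℂ (Fin n)).toMatrix c l j
        = ∑ l, N₀ k l * c j l := by simp_rw [hU]
      _ = N₀.mulVec (c j) k := by rw [Matrix.mulVec, dotProduct]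
      _ = d j * c j k := by rw [hceq j]; rfl
      _ = (Pi.basisFun ℂ (Fin n)).toMatrix c k j * d j := by rw [hU, mul_comm]
  · intro l
    have hev : fC.HasEigenvalue (d l) :=
      Module.End.hasEigenvalue_of_hasEigenvector ⟨hc l, c.ne_zero l⟩
    have hminroot : (minpoly ℂ fC).IsRoot (d l) :=
      (Module.End.hasEigenvalue_iff_isRoot).mp hev
    have hdvd : minpoly ℂ fC ∣ (Mm.charpoly.map i) :=
      minpoly.dvd ℂ fC (haevalfC Mm.charpoly (Mm.aeval_self_charpoly))
    exact hminroot.dvd hdvd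

theorem key_arith {x t : ℝ} (ht : t ≠ 0) {a b : ℤ} (hb : b ≠ 0)
    (h : x ^ b = t ^ a) : ∃ p s m : ℕ, 0 < p ∧ x ^ (2*p) * t ^ (2*m) = t ^ (2*s) := by
  obtain ⟨a', b', hb', h'⟩ : ∃ (a' b' : ℤ), 0 < b' ∧ x ^ b' = t ^ a' := by
    rcases lt_or_gt_of_ne hb with hneg | hpos
    · exact ⟨-a, -b, by omega, by rw [_root_.zpow_neg, _root_.zpow_neg, h]⟩
    · exact ⟨a, b, hpos, h⟩
  have hsq : x ^ (2 * b') = t ^ (2 * a') := by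
    rw [mul_comm (2:ℤ) b', mul_comm (2:ℤ) a', _root_.zpow_mul, _root_.zpow_mul, h']
  rcases le_or_gt 0 a' with ha' | ha'
  · refine ⟨b'.toNat, a'.toNat, 0, by omega, ?_⟩
    rw [pow_zero, mul_one]
    have h1 : ((2 * b'.toNat : ℕ) : ℤ) = 2 * b' := by omega
    have h2 : ((2 * a'.toNat : ℕ) : ℤ) = 2 * a' := by omega
    rw [← zpow_natCast x, ← zpow_natCast t, h1, h2, hsq]
  · refine ⟨b'.toNat, 0, (-a').toNat, by omega, ?_⟩
    rw [pow_zero]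
    have h1 : ((2 * b'.toNat : ℕ) : ℤ) = 2 * b' := by omega
    have h2 : ((2 * (-a').toNat : ℕ) : ℤ) = -(2 * a') := by omega
    rw [← zpow_natCast x, ← zpow_natCast t, h1, h2, hsq, _root_.zpow_neg]
    rw [mul_inv_cancel₀ (zpow_ne_zero _ ht)]

theorem pow_eq_one_of_nonneg {a : ℝ} (ha : 0 ≤ a) {N : ℕ} (hN : 0 < N) (h : a ^ N = 1) :
    a = 1 := by
  rcases lt_trichotomy a 1 with hlt | heq | hgt
  · have h2 : a ^ N < 1 := pow_lt_one₀ ha hlt (by omega)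
    rw [h] at h2; exact absurd h2 (lt_irrefl 1)
  · exact heq
  · have h2 : 1 < a ^ N := one_lt_pow₀ hgt (by omega)
    rw [h] at h2; exact absurd h2 (lt_irrefl 1)

end AuxLemmas

/-- Let `M ∈ GL n E` be a semisimple matrix over a number field `E` with
characteristic polynomial `P`, let `S` be the Zariski closure of `⟨M⟩` and `T = S°`.
Suppose for each real embedding `v : E → ℝ`, some nonzero integral power of `|i(α)|`
equals some integral power of `det M` for every root `α` of `P` and every complex
embedding `i` extending `v`.  Then the torus `(T ∩ SL n)°` is anisotropic at every real
place of `E`. -/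
theorem stmt8 {n : ℕ} {E : Type} [Field E] [NumberField E]
    (M : GL (Fin n) E)
    (hss : Module.End.IsSemisimple
      (Matrix.mulVecLin ((M : Matrix (Fin n) (Fin n) E))))
    (hR : ∀ (v : E →+* ℝ) (i : E →+* ℂ), (∀ x : E, i x = (v x : ℂ)) →
      ∀ α : ℂ,
        (Polynomial.map i (Matrix.charpoly (M : Matrix (Fin n) (Fin n) E))).IsRoot α →
        ∃ a b : ℤ, b ≠ 0 ∧
          ‖α‖ ^ b = (v ((M : Matrix (Fin n) (Fin n) E).det)) ^ a) :
    ∀ v : E →+* ℝ,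
      IsAnisoSub (zClosureSub (Subgroup.map (mapGL v)
        (idCompSub
          (idCompSub (zClosureSub (Subgroup.zpowers M)) ⊓
            (Matrix.GeneralLinearGroup.det : GL (Fin n) E →* Eˣ).ker)))) := by
  intro v
  classical
  set i : E →+* ℂ := Complex.ofRealHom.comp v with hidef
  have hiv : ∀ x : E, i x = (v x : ℂ) := fun x => rfl
  set Mmat : Matrix (Fin n) (Fin n) E := (M : Matrix (Fin n) (Fin n) E) with hMmatdef
  obtain ⟨U, W, d, hUW, hWU, hdiag, hroot⟩ := exists_diag i Mmat hss
  -- determinant facts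
  have hdet_ne : ∀ g : GL (Fin n) E, ((g : Matrix (Fin n) (Fin n) E)).det ≠ 0 := fun g =>
    ((Matrix.isUnit_iff_isUnit_det _).mp g.isUnit).ne_zero
  have hvdet_ne : ∀ g : GL (Fin n) E, v ((g : Matrix (Fin n) (Fin n) E).det) ≠ 0 := by
    intro g h0
    exact hdet_ne g (v.injective (by rw [h0, map_zero]))
  have hidet_ne : ∀ g : GL (Fin n) E, i ((g : Matrix (Fin n) (Fin n) E).det) ≠ 0 := by
    intro g h0
    rw [hiv] at h0
    exact hvdet_ne g (by exact_mod_cast h0)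
  have hdetmapv : ∀ A : Matrix (Fin n) (Fin n) E, (A.map v).det = v A.det := by
    intro A; rw [← RingHom.mapMatrix_apply]; exact (RingHom.map_det v A).symm
  have hdetmapi : ∀ A : Matrix (Fin n) (Fin n) E, (A.map i).det = i A.det := by
    intro A; rw [← RingHom.mapMatrix_apply]; exact (RingHom.map_det i A).symm
  set t0 : ℝ := v Mmat.det with ht0def
  have ht0 : t0 ≠ 0 := hvdet_ne M
  have hdata : ∀ l : Fin n, ∃ p s m : ℕ, 0 < p ∧
      ‖d l‖ ^ (2*p) * t0 ^ (2*m) = t0 ^ (2*s) := by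
    intro l
    obtain ⟨a, b, hb, heq⟩ := hR v i hiv (d l) (hroot l)
    exact key_arith ht0 hb heq
  choose pp ss mm hdata using hdata
  -- entries over ℂ
  set gi : GL (Fin n) E → Matrix (Fin n) (Fin n) ℂ :=
    fun g => ((g : Matrix (Fin n) (Fin n) E)).map i with hgidef
  set lam : Fin n → GL (Fin n) E → ℂ := fun l g => (W * gi g * U) l l with hlamdef
  have hrowmul : ∀ (X Y : Matrix (Fin n) (Fin n) ℂ) (l : Fin n) (c : ℂ),
      (∀ j, (W * X) l j = c * W l j) → ∀ j, (W * X * Y) l j = c * (W * Y) l j := by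
    intro X Y l c h j
    rw [Matrix.mul_apply, Matrix.mul_apply, Finset.mul_sum]
    exact Finset.sum_congr rfl fun k _ => by rw [h k, mul_assoc]
  have hlam_of_row : ∀ (X : Matrix (Fin n) (Fin n) ℂ) (l : Fin n) (c : ℂ),
      (∀ j, (W * X) l j = c * W l j) → (W * X * U) l l = c := by
    intro X l c h
    rw [hrowmul X U l c h l, show W * U = 1 from hWU, Matrix.one_apply_eq, mul_one]
  set Bcond : GL (Fin n) E → Prop := fun g => ∀ l : Fin n,
    (∀ j, (W * gi g) l j = lam l g * W l j) ∧
    (lam l g * (starRingEnd ℂ) (lam l g)) ^ (pp l) *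
      (i ((g : Matrix (Fin n) (Fin n) E).det)) ^ (2 * mm l)
      = (i ((g : Matrix (Fin n) (Fin n) E).det)) ^ (2 * ss l) with hBconddef
  have hgi_mul : ∀ g h : GL (Fin n) E, gi (g * h) = gi g * gi h := by
    intro g h
    show ((((g*h) : GL (Fin n) E) : Matrix (Fin n) (Fin n) E)).map i = _
    rw [Units.val_mul, Matrix.map_mul]
  have hgi_one : gi 1 = 1 := by
    show ((1 : Matrix (Fin n) (Fin n) E)).map i = 1
    exact Matrix.map_one i (map_zero i) (map_one i)
  have hgi_inv : ∀ g : GL (Fin n) E, gi g * gi g⁻¹ = 1 := by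
    intro g
    rw [← hgi_mul, mul_inv_cancel, hgi_one]
  have hlam_ne : ∀ g, Bcond g → ∀ l, lam l g ≠ 0 := by
    intro g hg l h0
    have h2 := (hg l).2
    rw [h0, zero_mul, zero_pow (hdata l).1.ne', zero_mul] at h2
    exact (pow_ne_zero _ (hidet_ne g)) h2.symm
  have hBone : Bcond 1 := by
    intro l
    have hrow : ∀ j, (W * gi 1) l j = (1:ℂ) * W l j := by
      intro j; rw [hgi_one, Matrix.mul_one, one_mul]
    have hl1 : lam l 1 = 1 := hlam_of_row _ l 1 hrow
    refine ⟨fun j => by rw [hl1]; exact hrow j, ?_⟩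
    rw [hl1]
    simp
  have hBmul : ∀ g h, Bcond g → Bcond h → Bcond (g*h) := by
    intro g h hg hh l
    have hrow : ∀ j, (W * gi (g*h)) l j = (lam l g * lam l h) * W l j := by
      intro j
      rw [hgi_mul, ← Matrix.mul_assoc]
      rw [hrowmul (gi g) (gi h) l (lam l g) (hg l).1 j, (hh l).1 j, mul_assoc]
    have hlgh : lam l (g*h) = lam l g * lam l h := hlam_of_row (gi (g*h)) l _ hrow
    refine ⟨fun j => by rw [hlgh]; exact hrow j, ?_⟩
    rw [hlgh]
    have hdgh : i (((g*h : GL (Fin n) E) : Matrix (Fin n) (Fin n) E).det)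
        = i ((g : Matrix (Fin n) (Fin n) E).det) *
          i ((h : Matrix (Fin n) (Fin n) E).det) := by
      rw [Units.val_mul, Matrix.det_mul, _root_.map_mul]
    rw [hdgh, _root_.map_mul]
    have e1 := (hg l).2
    have e2 := (hh l).2
    calc (lam l g * lam l h *
          ((starRingEnd ℂ) (lam l g) * (starRingEnd ℂ) (lam l h))) ^ pp l *
        (i ((g : Matrix (Fin n) (Fin n) E).det) *
          i ((h : Matrix (Fin n) (Fin n) E).det)) ^ (2 * mm l)
        = ((lam l g * (starRingEnd ℂ) (lam l g)) ^ pp l *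
            (i ((g : Matrix (Fin n) (Fin n) E).det)) ^ (2*mm l)) *
          ((lam l h * (starRingEnd ℂ) (lam l h)) ^ pp l *
            (i ((h : Matrix (Fin n) (Fin n) E).det)) ^ (2*mm l)) := by ring
      _ = (i ((g : Matrix (Fin n) (Fin n) E).det)) ^ (2 * ss l) *
          (i ((h : Matrix (Fin n) (Fin n) E).det)) ^ (2 * ss l) := by rw [e1, e2]
      _ = _ := by rw [mul_pow]
  have hBinv : ∀ g, Bcond g → Bcond g⁻¹ := by
    intro g hg l
    have hx := hlam_ne g hg l
    have hrowinv : ∀ j, (W * gi g⁻¹) l j = (lam l g)⁻¹ * W l j := by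
      intro j
      have h1 : (W * (gi g * gi g⁻¹)) l j = W l j := by rw [hgi_inv, Matrix.mul_one]
      rw [← Matrix.mul_assoc] at h1
      rw [hrowmul (gi g) (gi g⁻¹) l (lam l g) (hg l).1 j] at h1
      rw [← h1, inv_mul_cancel_left₀ hx]
    have hlinv : lam l g⁻¹ = (lam l g)⁻¹ := hlam_of_row _ l _ hrowinv
    refine ⟨fun j => by rw [hlinv]; exact hrowinv j, ?_⟩
    rw [hlinv, map_inv₀]
    have hdginv : i (((g⁻¹ : GL (Fin n) E) : Matrix (Fin n) (Fin n) E).det)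
        = (i ((g : Matrix (Fin n) (Fin n) E).det))⁻¹ := by
      have h1 : ((g : Matrix (Fin n) (Fin n) E)).det *
          (((g⁻¹ : GL (Fin n) E) : Matrix (Fin n) (Fin n) E)).det = 1 := by
        rw [← Matrix.det_mul, ← Units.val_mul, mul_inv_cancel, Units.val_one, Matrix.det_one]
      have h2 : i ((g : Matrix (Fin n) (Fin n) E).det) *
          i (((g⁻¹ : GL (Fin n) E) : Matrix (Fin n) (Fin n) E)).det = 1 := by
        rw [← _root_.map_mul, h1, _root_.map_one]
      exact (inv_eq_of_mul_eq_one_right h2).symm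
    rw [hdginv]
    have e1 := (hg l).2
    rw [← mul_inv, inv_pow, inv_pow, inv_pow, ← mul_inv, e1]
  set B : Subgroup (GL (Fin n) E) :=
    { carrier := {g | Bcond g}
      one_mem' := hBone
      mul_mem' := fun hg hh => hBmul _ _ hg hh
      inv_mem' := fun hg => hBinv _ hg } with hBdef
  -- M ∈ B
  have hWN : W * gi M = Matrix.diagonal d * W := by
    have h1 : W * gi M * U = Matrix.diagonal d := by
      have h2 : W * (gi M * U) = W * (U * Matrix.diagonal d) := by
        rw [show gi M = Mmat.map i from rfl, hdiag]
      rw [← Matrix.mul_assoc, ← Matrix.mul_assoc, hWU, Matrix.one_mul] at h2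
      exact h2
    calc W * gi M = W * gi M * (U * W) := by rw [hUW, Matrix.mul_one]
      _ = (W * gi M * U) * W := (Matrix.mul_assoc _ _ _).symm
      _ = Matrix.diagonal d * W := by rw [h1]
  have hMB : M ∈ B := by
    intro l
    have hrow : ∀ j, (W * gi M) l j = d l * W l j := by
      intro j; rw [hWN, Matrix.diagonal_mul]
    have hlM : lam l M = d l := hlam_of_row _ l _ hrow
    refine ⟨fun j => by rw [hlM]; exact hrow j, ?_⟩
    rw [hlM]
    have habs := (hdata l).2
    have hcast := congrArg (fun r : ℝ => (r : ℂ)) habs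
    push_cast at hcast
    rw [Complex.mul_conj, ← Complex.sq_norm]
    rw [show i ((M : Matrix (Fin n) (Fin n) E).det) = ((t0 : ℝ) : ℂ) from rfl]
    push_cast
    rw [← pow_mul]
    exact hcast
  -- closedness of B
  have hBclosed : IsClosedSub B := by
    set Λp : Fin n → MvPolynomial (Fin n × Fin n) ℂ := fun l =>
      ∑ k' : Fin n, (∑ k : Fin n, MvPolynomial.C (W l k) * MvPolynomial.X (k, k'))
        * MvPolynomial.C (U k' l) with hΛpdef
    set Λcp : Fin n → MvPolynomial (Fin n × Fin n) ℂ := fun l =>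
      ∑ k' : Fin n, (∑ k : Fin n, MvPolynomial.C ((starRingEnd ℂ) (W l k)) *
        MvPolynomial.X (k, k')) * MvPolynomial.C ((starRingEnd ℂ) (U k' l)) with hΛcpdef
    set Rowp : Fin n → Fin n → MvPolynomial (Fin n × Fin n) ℂ := fun l j =>
      (∑ k : Fin n, MvPolynomial.C (W l k) * MvPolynomial.X (k, j)) -
        Λp l * MvPolynomial.C (W l j) with hRowpdef
    set Absp : Fin n → MvPolynomial (Fin n × Fin n) ℂ := fun l =>
      (Λp l * Λcp l) ^ (pp l) * (detPoly n ℂ) ^ (2 * mm l) -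
        (detPoly n ℂ) ^ (2 * ss l) with hAbspdef
    have hevalΛ : ∀ (l : Fin n) (g : GL (Fin n) E), MvPolynomial.eval
        (fun q : Fin n × Fin n => i ((g : Matrix (Fin n) (Fin n) E) q.1 q.2)) (Λp l)
          = lam l g := by
      intro l g
      rw [hΛpdef, hlamdef]
      simp only [_root_.map_sum, _root_.map_mul, MvPolynomial.eval_C, MvPolynomial.eval_X,
        Matrix.mul_apply, hgidef, Matrix.map_apply]
    have hconj_i : ∀ e : E, (starRingEnd ℂ) (i e) = i e := fun e =>
      Complex.conj_ofReal (v e)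
    have hevalΛc : ∀ (l : Fin n) (g : GL (Fin n) E), MvPolynomial.eval
        (fun q : Fin n × Fin n => i ((g : Matrix (Fin n) (Fin n) E) q.1 q.2)) (Λcp l)
          = (starRingEnd ℂ) (lam l g) := by
      intro l g
      rw [hΛcpdef, hlamdef]
      simp only [_root_.map_sum, _root_.map_mul, MvPolynomial.eval_C, MvPolynomial.eval_X,
        Matrix.mul_apply, hgidef, Matrix.map_apply, hconj_i]
    have hevalRow : ∀ (l j : Fin n) (g : GL (Fin n) E), MvPolynomial.eval
        (fun q : Fin n × Fin n => i ((g : Matrix (Fin n) (Fin n) E) q.1 q.2)) (Rowp l j)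
          = (W * gi g) l j - lam l g * W l j := by
      intro l j g
      rw [hRowpdef, _root_.map_sub, _root_.map_mul, hevalΛ l g, MvPolynomial.eval_C]
      congr 1
      simp only [_root_.map_sum, _root_.map_mul, MvPolynomial.eval_C, MvPolynomial.eval_X,
        Matrix.mul_apply, hgidef, Matrix.map_apply]
    have hevalDet : ∀ g : GL (Fin n) E, MvPolynomial.eval
        (fun q : Fin n × Fin n => i ((g : Matrix (Fin n) (Fin n) E) q.1 q.2)) (detPoly n ℂ)
          = i ((g : Matrix (Fin n) (Fin n) E).det) := by
      intro g
      rw [show (fun q : Fin n × Fin n => i ((g : Matrix (Fin n) (Fin n) E) q.1 q.2))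
        = (fun q : Fin n × Fin n => (gi g) q.1 q.2) from rfl, eval_detPoly]
      exact hdetmapi _
    have hevalAbs : ∀ (l : Fin n) (g : GL (Fin n) E), MvPolynomial.eval
        (fun q : Fin n × Fin n => i ((g : Matrix (Fin n) (Fin n) E) q.1 q.2)) (Absp l)
          = (lam l g * (starRingEnd ℂ) (lam l g)) ^ (pp l) *
            (i ((g : Matrix (Fin n) (Fin n) E).det)) ^ (2 * mm l) -
            (i ((g : Matrix (Fin n) (Fin n) E).det)) ^ (2 * ss l) := by
      intro l g
      rw [hAbspdef]
      simp only [_root_.map_sub, _root_.map_mul, _root_.map_pow]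
      rw [hevalΛ l g, hevalΛc l g, hevalDet g]
    have hBset : (B : Set (GL (Fin n) E)) = ⋂ l : Fin n,
        ((⋂ j : Fin n, {g : GL (Fin n) E | MvPolynomial.eval
            (fun q : Fin n × Fin n => i ((g : Matrix (Fin n) (Fin n) E) q.1 q.2))
            (Rowp l j) = 0})
          ∩ {g : GL (Fin n) E | MvPolynomial.eval
            (fun q : Fin n × Fin n => i ((g : Matrix (Fin n) (Fin n) E) q.1 q.2))
            (Absp l) = 0}) := by
      ext g
      simp only [Set.mem_iInter, Set.mem_inter_iff, Set.mem_setOf_eq, SetLike.mem_coe]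
      show Bcond g ↔ _
      refine forall_congr' fun l => and_congr ?_ ?_
      · refine forall_congr' fun j => ?_
        rw [hevalRow l j g, sub_eq_zero]
      · rw [hevalAbs l g, sub_eq_zero]
    rw [IsClosedSub, IsZClosedSet, hBset]
    letI : TopologicalSpace (GL (Fin n) E) := zariskiGL n E
    refine isClosed_iInter (fun l => ?_)
    exact IsClosed.inter
      (isClosed_iInter (fun j => isZClosed_eval_comp i (Rowp l j)))
      (isZClosed_eval_comp i (Absp l))
  -- subgroups
  set S : Subgroup (GL (Fin n) E) := zClosureSub (Subgroup.zpowers M) with hSdef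
  have hSB : S ≤ B := zClosureSub_le hBclosed (Subgroup.zpowers_le.mpr hMB)
  set T' : Subgroup (GL (Fin n) E) := idCompSub S ⊓
    (Matrix.GeneralLinearGroup.det : GL (Fin n) E →* Eˣ).ker with hT'def
  set G : Subgroup (GL (Fin n) E) := idCompSub T' with hGdef
  set H₀ : Subgroup (GL (Fin n) ℝ) := zClosureSub (Subgroup.map (mapGL v) G) with hH₀def
  intro Ppoly kdeg hnv hmul
  have hIm : Subgroup.map (mapGL v) G ≤ H₀ := le_zClosureSub _
  have hmemH : ∀ x : GL (Fin n) E, x ∈ G → mapGL v x ∈ H₀ := fun x hx =>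
    hIm (Subgroup.mem_map_of_mem _ hx)
  have hχ1 : regFunGL Ppoly kdeg (1 : GL (Fin n) ℝ) = 1 := by
    have h1 := hmul 1 H₀.one_mem 1 H₀.one_mem
    rw [mul_one] at h1
    exact mul_left_cancel₀ (hnv 1 H₀.one_mem) (by rw [mul_one, ← h1])
  set ψ : GL (Fin n) E → ℝ := fun x => regFunGL Ppoly kdeg (mapGL v x) with hψdef
  have hψmul : ∀ x ∈ G, ∀ y ∈ G, ψ (x * y) = ψ x * ψ y := by
    intro x hx y hy
    show regFunGL Ppoly kdeg (mapGL v (x*y)) = _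
    rw [_root_.map_mul]
    exact hmul _ (hmemH x hx) _ (hmemH y hy)
  have hψ1 : ψ 1 = 1 := by
    show regFunGL Ppoly kdeg (mapGL v 1) = 1
    rw [_root_.map_one]; exact hχ1
  have hψinv : ∀ x ∈ G, ψ x * ψ x⁻¹ = 1 := by
    intro x hx
    rw [← hψmul x hx x⁻¹ (inv_mem hx), mul_inv_cancel, hψ1]
  have hcoe : ∀ x : GL (Fin n) E,
      ((mapGL v x : GL (Fin n) ℝ) : Matrix (Fin n) (Fin n) ℝ)
        = ((x : Matrix (Fin n) (Fin n) E)).map v := fun x => rfl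
  have hψeval : ∀ x : GL (Fin n) E, ((x : Matrix (Fin n) (Fin n) E)).det = 1 →
      ψ x = MvPolynomial.eval
        (fun q : Fin n × Fin n => v ((x : Matrix (Fin n) (Fin n) E) q.1 q.2)) Ppoly := by
    intro x hdx
    show regFunGL Ppoly kdeg (mapGL v x) = _
    rw [regFunGL, hcoe x, hdetmapv,
      hdx, _root_.map_one, one_pow, div_one]
    rfl
  set C1 : ℝ := ∑ k' : Fin n, ∑ j' : Fin n, ∑ l : Fin n,
      ‖U k' l‖ * ‖W l j'‖ with hC1def
  set C2 : ℝ := max C1 1 with hC2def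
  set C3 : ℝ := ∑ m ∈ Ppoly.support, |Ppoly.coeff m| * C2 ^ (m.sum fun _ e => e) with hC3def
  have habs1 : ∀ x : GL (Fin n) E, x ∈ B → ((x : Matrix (Fin n) (Fin n) E)).det = 1 →
      ∀ l, ‖lam l x‖ = 1 := by
    intro x hx hdx l
    have h2 := (hx l).2
    rw [hdx, _root_.map_one, one_pow, one_pow, mul_one] at h2
    rw [Complex.mul_conj, ← Complex.sq_norm] at h2
    have h3 : ((‖lam l x‖ ^ 2) ^ pp l : ℝ) = 1 := by exact_mod_cast h2
    have h4 : ‖lam l x‖ ^ 2 = 1 :=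
      pow_eq_one_of_nonneg (sq_nonneg _) (hdata l).1 h3
    exact pow_eq_one_of_nonneg (norm_nonneg _) (by norm_num) h4
  have hentry : ∀ x : GL (Fin n) E, x ∈ B → ((x : Matrix (Fin n) (Fin n) E)).det = 1 →
      ∀ q1 q2 : Fin n, |v ((x : Matrix (Fin n) (Fin n) E) q1 q2)| ≤ C1 := by
    intro x hx hdx q1 q2
    have hrows : W * gi x = Matrix.diagonal (fun l => lam l x) * W := by
      ext l j
      rw [Matrix.diagonal_mul]
      exact (hx l).1 j
    have hxi : gi x = U * (Matrix.diagonal (fun l => lam l x) * W) := by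
      calc gi x = 1 * gi x := (Matrix.one_mul _).symm
        _ = (U * W) * gi x := by rw [hUW]
        _ = U * (W * gi x) := Matrix.mul_assoc _ _ _
        _ = _ := by rw [hrows]
    have hval : i ((x : Matrix (Fin n) (Fin n) E) q1 q2)
        = ∑ l, U q1 l * (lam l x * W l q2) := by
      rw [show i ((x : Matrix (Fin n) (Fin n) E) q1 q2) = gi x q1 q2 from rfl, hxi,
        Matrix.mul_apply]
      exact Finset.sum_congr rfl fun l _ => by rw [Matrix.diagonal_mul]
    have habs : |v ((x : Matrix (Fin n) (Fin n) E) q1 q2)|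
        = ‖i ((x : Matrix (Fin n) (Fin n) E) q1 q2)‖ := by
      rw [show i ((x : Matrix (Fin n) (Fin n) E) q1 q2)
        = ((v ((x : Matrix (Fin n) (Fin n) E) q1 q2) : ℝ) : ℂ) from rfl, Complex.norm_real, Real.norm_eq_abs]
    rw [habs, hval]
    have step1 : ‖∑ l, U q1 l * (lam l x * W l q2)‖
        ≤ ∑ l, ‖U q1 l‖ * ‖W l q2‖ := by
      refine le_trans (norm_sum_le _ _) ?_
      refine Finset.sum_le_sum fun l _ => ?_
      rw [norm_mul, norm_mul, habs1 x hx hdx l, one_mul]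
    refine le_trans step1 ?_
    have step2 : ∑ l, ‖U q1 l‖ * ‖W l q2‖
        ≤ ∑ j' : Fin n, ∑ l, ‖U q1 l‖ * ‖W l j'‖ := by
      refine Finset.single_le_sum (f := fun j' => ∑ l, ‖U q1 l‖ *
        ‖W l j'‖) (fun j' _ => ?_) (Finset.mem_univ q2)
      exact Finset.sum_nonneg fun l _ =>
        mul_nonneg (norm_nonneg _) (norm_nonneg _)
    refine le_trans step2 ?_
    refine Finset.single_le_sum (f := fun k' => ∑ j' : Fin n, ∑ l, ‖U k' l‖ *
      ‖W l j'‖) (fun k' _ => ?_) (Finset.mem_univ q1)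
    exact Finset.sum_nonneg fun j' _ => Finset.sum_nonneg fun l _ =>
      mul_nonneg (norm_nonneg _) (norm_nonneg _)
  have hψbound : ∀ x : GL (Fin n) E, x ∈ B → ((x : Matrix (Fin n) (Fin n) E)).det = 1 →
      |ψ x| ≤ C3 := by
    intro x hx hdx
    rw [hψeval x hdx, MvPolynomial.eval_eq]
    refine le_trans (Finset.abs_sum_le_sum_abs _ _) ?_
    refine Finset.sum_le_sum fun m hm => ?_
    rw [abs_mul]
    refine mul_le_mul_of_nonneg_left ?_ (abs_nonneg _)
    rw [Finset.abs_prod]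
    have hterm : ∀ s ∈ m.support,
        |v ((x : Matrix (Fin n) (Fin n) E) s.1 s.2) ^ m s| ≤ C2 ^ m s := by
      intro s _
      rw [abs_pow]
      refine pow_le_pow_left₀ (abs_nonneg _) ?_ _
      exact le_trans (hentry x hx hdx s.1 s.2) (le_max_left _ _)
    refine le_trans (Finset.prod_le_prod (fun s _ => abs_nonneg _) hterm) ?_
    rw [Finset.prod_pow_eq_pow_sum]
    rfl
  -- step 1 : values ±1
  have hdet1 : ∀ y : GL (Fin n) E,
      y ∈ (Matrix.GeneralLinearGroup.det : GL (Fin n) E →* Eˣ).ker →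
      ((y : Matrix (Fin n) (Fin n) E)).det = 1 := by
    intro y hy
    have h1 : Matrix.GeneralLinearGroup.det y = 1 := hy
    have h2 := congrArg (fun u : Eˣ => (u : E)) h1
    simpa [Matrix.GeneralLinearGroup.val_det_apply] using h2
  have step1 : ∀ x : GL (Fin n) E, x ∈ B →
      x ∈ (Matrix.GeneralLinearGroup.det : GL (Fin n) E →* Eˣ).ker → x ∈ G →
      ψ x = 1 ∨ ψ x = -1 := by
    intro x hxB hxK hxG
    have hub : ∀ y : GL (Fin n) E, y ∈ B →
        y ∈ (Matrix.GeneralLinearGroup.det : GL (Fin n) E →* Eˣ).ker → y ∈ G →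
        |ψ y| ≤ 1 := by
      intro y hyB hyK hyG
      by_contra hgt
      push_neg at hgt
      obtain ⟨m, hm⟩ := pow_unbounded_of_one_lt C3 hgt
      have hym : ∀ m : ℕ, ψ (y ^ m) = (ψ y) ^ m := by
        intro m
        induction m with
        | zero => rw [pow_zero, pow_zero, hψ1]
        | succ m ih => rw [pow_succ, pow_succ, hψmul (y^m) (pow_mem hyG m) y hyG, ih]
      have hdy : ((y ^ m : GL (Fin n) E) : Matrix (Fin n) (Fin n) E).det = 1 :=
        hdet1 _ (pow_mem hyK m)
      have hb2 := hψbound (y ^ m) (pow_mem hyB m) hdy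
      rw [hym, abs_pow] at hb2
      linarith
    have h1 : |ψ x| ≤ 1 := hub x hxB hxK hxG
    have h2 : |ψ x⁻¹| ≤ 1 := hub x⁻¹ (inv_mem hxB) (inv_mem hxK) (inv_mem hxG)
    have h3 := hψinv x hxG
    have h4 : |ψ x| = 1 := by
      have h5 : |ψ x| * |ψ x⁻¹| = 1 := by rw [← abs_mul, h3, abs_one]
      nlinarith [abs_nonneg (ψ x), abs_nonneg (ψ x⁻¹)]
    exact (abs_eq (by norm_num : (0:ℝ) ≤ 1)).mp h4
  -- step 2 : level sets are Zariski closed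
  have hψc : ∀ (c : ℝ) (g : GL (Fin n) E), ψ g = c ↔
      MvPolynomial.eval (fun q : Fin n × Fin n => i ((g : Matrix (Fin n) (Fin n) E) q.1 q.2))
        (MvPolynomial.map Complex.ofRealHom
          (Ppoly - MvPolynomial.C c * (detPoly n ℝ) ^ kdeg)) = 0 := by
    intro c g
    set Q : MvPolynomial (Fin n × Fin n) ℝ :=
      Ppoly - MvPolynomial.C c * (detPoly n ℝ) ^ kdeg with hQdef
    have h1 : MvPolynomial.eval
        (fun q : Fin n × Fin n => i ((g : Matrix (Fin n) (Fin n) E) q.1 q.2))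
        (MvPolynomial.map Complex.ofRealHom Q)
        = Complex.ofRealHom (MvPolynomial.eval
          (fun q : Fin n × Fin n => v ((g : Matrix (Fin n) (Fin n) E) q.1 q.2)) Q) := by
      rw [MvPolynomial.eval_map]
      rw [show MvPolynomial.eval (fun q : Fin n × Fin n =>
          v ((g : Matrix (Fin n) (Fin n) E) q.1 q.2)) Q
        = MvPolynomial.eval₂ (RingHom.id ℝ) (fun q : Fin n × Fin n =>
          v ((g : Matrix (Fin n) (Fin n) E) q.1 q.2)) Q from (MvPolynomial.eval₂_id Q).symm]
      rw [MvPolynomial.eval₂_comp_left Complex.ofRealHom]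
      rw [RingHom.comp_id]
      rfl
    rw [h1]
    rw [show (Complex.ofRealHom (MvPolynomial.eval
      (fun q : Fin n × Fin n => v ((g : Matrix (Fin n) (Fin n) E) q.1 q.2)) Q) = 0)
      ↔ (MvPolynomial.eval
        (fun q : Fin n × Fin n => v ((g : Matrix (Fin n) (Fin n) E) q.1 q.2)) Q = 0)
      from Complex.ofReal_eq_zero]
    have h2 : MvPolynomial.eval
        (fun q : Fin n × Fin n => v ((g : Matrix (Fin n) (Fin n) E) q.1 q.2)) Q
        = MvPolynomial.eval
          (fun q : Fin n × Fin n => v ((g : Matrix (Fin n) (Fin n) E) q.1 q.2)) Ppoly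
          - c * (v ((g : Matrix (Fin n) (Fin n) E)).det) ^ kdeg := by
      rw [hQdef, _root_.map_sub, _root_.map_mul, _root_.map_pow, MvPolynomial.eval_C]
      congr 2
      rw [show (fun q : Fin n × Fin n => v ((g : Matrix (Fin n) (Fin n) E) q.1 q.2))
        = (fun q : Fin n × Fin n =>
          (((g : Matrix (Fin n) (Fin n) E)).map v) q.1 q.2) from rfl, eval_detPoly]
      rw [hdetmapv]
    rw [h2]
    have h3 : ψ g = MvPolynomial.eval
        (fun q : Fin n × Fin n => v ((g : Matrix (Fin n) (Fin n) E) q.1 q.2)) Ppoly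
        / (v ((g : Matrix (Fin n) (Fin n) E)).det) ^ kdeg := by
      show regFunGL Ppoly kdeg (mapGL v g) = _
      rw [regFunGL, hcoe g, hdetmapv]
      rfl
    rw [h3, div_eq_iff (pow_ne_zero _ (hvdet_ne g)), sub_eq_zero]
  have hstep2 : ∀ c : ℝ, IsZClosedSet {g : GL (Fin n) E | ψ g = c} := by
    intro c
    have he : {g : GL (Fin n) E | ψ g = c} = {g : GL (Fin n) E |
        MvPolynomial.eval
          (fun q : Fin n × Fin n => i ((g : Matrix (Fin n) (Fin n) E) q.1 q.2))
          (MvPolynomial.map Complex.ofRealHom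
            (Ppoly - MvPolynomial.C c * (detPoly n ℝ) ^ kdeg)) = 0} := by
      ext g; exact hψc c g
    rw [he]
    exact isZClosed_eval_comp i _
  -- connectivity argument
  have hconnK : ∀ K : Subgroup (GL (Fin n) E),
      K ≤ T' → IsConnectedSub K → ∀ x ∈ K, ψ x = 1 := by
    intro K hKT hKconn x hxK
    have hKG : K ≤ G := le_sSup ⟨hKT, hKconn⟩
    have hmem : ∀ y, y ∈ K → y ∈ B ∧
        y ∈ (Matrix.GeneralLinearGroup.det : GL (Fin n) E →* Eˣ).ker ∧ y ∈ G := by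
      intro y hy
      have h1 := hKT hy
      rw [hT'def, Subgroup.mem_inf] at h1
      exact ⟨hSB ((idCompSub_le S) h1.1), h1.2, hKG hy⟩
    have hpm : ∀ y ∈ K, ψ y = 1 ∨ ψ y = -1 := fun y hy =>
      step1 y (hmem y hy).1 (hmem y hy).2.1 (hmem y hy).2.2
    by_contra hne
    have hZ1 := hstep2 1
    have hZ2 := hstep2 (-1)
    have hcov : (K : Set (GL (Fin n) E)) ⊆
        {g : GL (Fin n) E | ψ g = -1}ᶜ ∪ {g : GL (Fin n) E | ψ g = 1}ᶜ := by
      intro y hy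
      rcases hpm y hy with h | h
      · left; simp only [Set.mem_compl_iff, Set.mem_setOf_eq, h]; norm_num
      · right; simp only [Set.mem_compl_iff, Set.mem_setOf_eq, h]; norm_num
    have hne1 : ((K : Set (GL (Fin n) E)) ∩ {g : GL (Fin n) E | ψ g = -1}ᶜ).Nonempty :=
      ⟨1, K.one_mem, by simp only [Set.mem_compl_iff, Set.mem_setOf_eq, hψ1]; norm_num⟩
    have hne2 : ((K : Set (GL (Fin n) E)) ∩ {g : GL (Fin n) E | ψ g = 1}ᶜ).Nonempty :=
      ⟨x, hxK, by simp only [Set.mem_compl_iff, Set.mem_setOf_eq]; exact hne⟩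
    obtain ⟨y, hyK, hy2, hy1⟩ := hKconn _ _ (hZ2.isOpen_compl) (hZ1.isOpen_compl)
      hcov hne1 hne2
    rcases hpm y hyK with h | h
    · exact hy1 h
    · exact hy2 h
  have hGpsi : ∀ x ∈ G, ψ x = 1 := by
    intro x hx
    let A' : Subgroup (GL (Fin n) E) :=
      { carrier := {y | y ∈ G ∧ ψ y = 1}
        one_mem' := ⟨G.one_mem, hψ1⟩
        mul_mem' := fun {a b} ha hb => ⟨mul_mem ha.1 hb.1, by
          rw [hψmul a ha.1 b hb.1, ha.2, hb.2, mul_one]⟩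
        inv_mem' := fun {a} ha => ⟨inv_mem ha.1, by
          have h := hψinv a ha.1
          rw [ha.2, one_mul] at h
          exact h⟩ }
    have hGA : G ≤ A' := by
      rw [hGdef]
      refine sSup_le fun K hK => ?_
      intro y hy
      exact ⟨(le_sSup hK : K ≤ G) hy, hconnK K hK.1 hK.2 y hy⟩
    exact (hGA hx).2
  -- conclusion
  intro t ht
  have hlevel1 : {s : GL (Fin n) ℝ | regFunGL Ppoly kdeg s = 1}
      = {s : GL (Fin n) ℝ | MvPolynomial.eval
          (fun q : Fin n × Fin n => (s : Matrix (Fin n) (Fin n) ℝ) q.1 q.2)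
          (Ppoly - (detPoly n ℝ) ^ kdeg) = 0} := by
    ext s
    have hds : ((s : Matrix (Fin n) (Fin n) ℝ)).det ≠ 0 :=
      ((Matrix.isUnit_iff_isUnit_det _).mp s.isUnit).ne_zero
    simp only [Set.mem_setOf_eq, regFunGL, _root_.map_sub, _root_.map_pow]
    rw [show MvPolynomial.eval
      (fun q : Fin n × Fin n => (s : Matrix (Fin n) (Fin n) ℝ) q.1 q.2) (detPoly n ℝ)
      = ((s : Matrix (Fin n) (Fin n) ℝ)).det from eval_detPoly _]
    rw [div_eq_one_iff_eq (pow_ne_zero _ hds), sub_eq_zero]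
  let K' : Subgroup (GL (Fin n) ℝ) :=
    { carrier := {s | s ∈ H₀ ∧ regFunGL Ppoly kdeg s = 1}
      one_mem' := ⟨H₀.one_mem, hχ1⟩
      mul_mem' := fun {a b} ha hb => ⟨mul_mem ha.1 hb.1, by
        rw [hmul a ha.1 b hb.1, ha.2, hb.2, mul_one]⟩
      inv_mem' := fun {a} ha => ⟨inv_mem ha.1, by
        have h3 := hmul a ha.1 a⁻¹ (inv_mem ha.1)
        rw [mul_inv_cancel, hχ1, ha.2, one_mul] at h3
        exact h3.symm⟩ }
  have hK'closed : IsClosedSub K' := by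
    have he : (K' : Set (GL (Fin n) ℝ)) =
        (H₀ : Set (GL (Fin n) ℝ)) ∩ {s : GL (Fin n) ℝ | regFunGL Ppoly kdeg s = 1} := rfl
    rw [IsClosedSub, IsZClosedSet, he, hlevel1]
    letI : TopologicalSpace (GL (Fin n) ℝ) := zariskiGL n ℝ
    exact IsClosed.inter
      (isClosedSub_zClosureSub (Subgroup.map (mapGL v) G)) (isZClosed_eval_zero _)
  have hImK' : Subgroup.map (mapGL v) G ≤ K' := by
    rintro s ⟨x, hx, rfl⟩
    exact ⟨hmemH x hx, hGpsi x hx⟩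
  have hH₀K' : H₀ ≤ K' := zClosureSub_le hK'closed hImK'
  exact (hH₀K' ht).2

end
end

section
/- Let G₁ ⊆ GL_{n,C} be a connected semisimple subgroup acting irreducibly on C^n, with maximal torus T and root set R in the character lattice X of T. Suppose for every g in the normalizer N_{GL_n(C)}(T), the conjugate group gG₁g^{-1} together with its root set g·R (relative to the same torus T and same formal character T ⊆ GL_n) avoids the four exceptional coincidences of Larsen–Pink (spin/tensor-of-spins for type B; highest weight (k,k−1,...,1,0,...,0) for C_r vs D_r; the 27-dimensional representations of A_2 vs G_2; the 4096-dimensional representations of C_4, D_4, F_4). Then g·R = R for all g ∈ N_{GL_n(C)}(T), i.e., the invariance of roots condition holds. -/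
open Matrix
open scoped MatrixGroups

noncomputable section

/-- The vanishing ideal of a subset of `GL n F`. -/
def vanishingIdealGL {n : ℕ} {F : Type} [Field F] (s : Set (GL (Fin n) F)) :
    Ideal (MvPolynomial (Fin n × Fin n) F) :=
  ⨅ (g : GL (Fin n) F) (_ : g ∈ s),
    RingHom.ker (MvPolynomial.eval
      (fun q : Fin n × Fin n => (g : Matrix (Fin n) (Fin n) F) q.1 q.2))

/-- The Lie algebra of a Zariski-closed subgroup of `GL n F` (via dual numbers). -/
def lieAlgOf {n : ℕ} {F : Type} [Field F] (G : Subgroup (GL (Fin n) F)) :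
    Set (Matrix (Fin n) (Fin n) F) :=
  {A | ∀ p ∈ vanishingIdealGL (G : Set (GL (Fin n) F)),
    MvPolynomial.eval
      (fun q : Fin n × Fin n =>
        algebraMap F (DualNumber F) ((1 : Matrix (Fin n) (Fin n) F) q.1 q.2) +
          DualNumber.eps * algebraMap F (DualNumber F) (A q.1 q.2))
      (MvPolynomial.map (algebraMap F (DualNumber F)) p) = 0}

/-- The character of a diagonal torus with exponent vector `m`. -/
def chiVec {n : ℕ} {F : Type} [Field F] (m : Fin n → ℤ) (t : GL (Fin n) F) : F :=
  ∏ i, ((t : Matrix (Fin n) (Fin n) F) i i) ^ (m i)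

/-- `m` is a root of `(G, T)` for a diagonal torus `T`. -/
def IsRootVec {n : ℕ} {F : Type} [Field F] (G T : Subgroup (GL (Fin n) F))
    (m : Fin n → ℤ) : Prop :=
  (∃ t ∈ T, chiVec m t ≠ 1) ∧
  ∃ A ∈ lieAlgOf G, A ≠ 0 ∧ ∀ t ∈ T,
    (t : Matrix (Fin n) (Fin n) F) * A =
      chiVec m t • (A * (t : Matrix (Fin n) (Fin n) F))

/-- Semisimplicity: reductive with finite center. -/
def IsSemisimpleSub {n : ℕ} {F : Type} [Field F] (G : Subgroup (GL (Fin n) F)) : Prop :=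
  IsReductiveSub G ∧ Set.Finite {g : GL (Fin n) F | g ∈ G ∧ ∀ h ∈ G, Commute g h}

section Helpers

open MvPolynomial Topology

/-! ### Conjugation in a group -/

theorem mem_map_conj {G : Type*} [Group G] (g x : G) (H : Subgroup G) :
    x ∈ Subgroup.map (MulAut.conj g).toMonoidHom H ↔ g⁻¹ * x * g ∈ H := by
  simp only [Subgroup.mem_map_equiv, MulAut.conj_symm_apply]

theorem mem_map_conj_inv {G : Type*} [Group G] (g x : G) (H : Subgroup G) :
    x ∈ Subgroup.map (MulAut.conj g⁻¹).toMonoidHom H ↔ g * x * g⁻¹ ∈ H := by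
  rw [mem_map_conj, inv_inv]

theorem conj_coe_preimage {G : Type*} [Group G] (g : G) (H : Subgroup G) :
    ((Subgroup.map (MulAut.conj g).toMonoidHom H : Subgroup G) : Set G) =
      (fun x => g⁻¹ * x * g) ⁻¹' (H : Set G) :=
  Set.ext fun x => mem_map_conj g x H

theorem conj_coe_image {G : Type*} [Group G] (g : G) (H : Subgroup G) :
    ((Subgroup.map (MulAut.conj g).toMonoidHom H : Subgroup G) : Set G) =
      (fun x => g * x * g⁻¹) '' (H : Set G) := by
  ext x
  constructor
  · intro hx
    exact ⟨g⁻¹ * x * g, (mem_map_conj g x H).1 hx, by group⟩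
  · rintro ⟨y, hy, rfl⟩
    exact (mem_map_conj g _ H).2 (by simpa [mul_assoc] using hy)

theorem commute_conj {G : Type*} [Group G] {a b : G} (g : G) (h : Commute a b) :
    Commute (g * a * g⁻¹) (g * b * g⁻¹) := by
  simpa using h.map (MulAut.conj g).toMonoidHom

/-! ### Polynomial substitution for conjugation -/

variable {n : ℕ} {R S : Type} [CommRing R] [CommRing S]

/-- Substitution polynomial for conjugation: entry `(q.1, q.2)` of `gv * X * gv'`. -/
def conjPoly (gv gv' : Matrix (Fin n) (Fin n) R) (q : Fin n × Fin n) :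
    MvPolynomial (Fin n × Fin n) R :=
  ∑ k, ∑ l, MvPolynomial.C (gv q.1 k) * (MvPolynomial.X (k, l) * MvPolynomial.C (gv' l q.2))

theorem eval_conjPoly (gv gv' A : Matrix (Fin n) (Fin n) R) (q : Fin n × Fin n) :
    MvPolynomial.eval (fun q' => A q'.1 q'.2) (conjPoly gv gv' q) = (gv * A * gv') q.1 q.2 := by
  simp only [conjPoly, map_sum, _root_.map_mul, eval_C, eval_X, Matrix.mul_apply,
    Finset.sum_mul]
  rw [Finset.sum_comm]
  refine Finset.sum_congr rfl fun k _ => Finset.sum_congr rfl fun l _ => ?_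
  ring

theorem map_conjPoly (f : R →+* S) (gv gv' : Matrix (Fin n) (Fin n) R) (q : Fin n × Fin n) :
    MvPolynomial.map f (conjPoly gv gv' q) = conjPoly (gv.map f) (gv'.map f) q := by
  simp [conjPoly, MvPolynomial.map_C, MvPolynomial.map_X, Matrix.map_apply]

theorem eval_bind₁' {σ τ : Type*} (f : τ → R) (g : σ → MvPolynomial τ R)
    (φ : MvPolynomial σ R) :
    MvPolynomial.eval f (MvPolynomial.bind₁ g φ) =
      MvPolynomial.eval (fun i => MvPolynomial.eval f (g i)) φ :=
  eval₂Hom_bind₁ _ _ _ _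

/-! ### Zariski continuity of conjugation -/

theorem continuous_zariskiMatrix_of_poly
    (φ : Matrix (Fin n) (Fin n) R → Matrix (Fin n) (Fin n) R)
    (P : Fin n × Fin n → MvPolynomial (Fin n × Fin n) R)
    (hφ : ∀ A q, φ A q.1 q.2 = MvPolynomial.eval (fun q' => A q'.1 q'.2) (P q)) :
    Continuous[zariskiMatrix n R, zariskiMatrix n R] φ := by
  unfold zariskiMatrix
  rw [continuous_generateFrom_iff]
  rintro s ⟨p, rfl⟩
  have h : φ ⁻¹' {A | MvPolynomial.eval (fun q => A q.1 q.2) p ≠ 0} =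
      {A | MvPolynomial.eval (fun q => A q.1 q.2) (MvPolynomial.bind₁ P p) ≠ 0} := by
    ext A
    have : MvPolynomial.eval (fun q => φ A q.1 q.2) p =
        MvPolynomial.eval (fun q => A q.1 q.2) (MvPolynomial.bind₁ P p) := by
      rw [eval_bind₁']
      exact congrArg (fun f => MvPolynomial.eval f p) (funext fun i => hφ A i)
    simp [Set.mem_preimage, this]
  rw [h]
  exact TopologicalSpace.isOpen_generateFrom_of_mem ⟨_, rfl⟩

theorem continuous_conjMatrix (g : GL (Fin n) R) :
    Continuous[zariskiMatrix n R, zariskiMatrix n R]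
      (fun A => (g : Matrix (Fin n) (Fin n) R) * A *
        ((g⁻¹ : GL (Fin n) R) : Matrix (Fin n) (Fin n) R)) :=
  continuous_zariskiMatrix_of_poly _ (conjPoly _ _) (fun A q => (eval_conjPoly _ _ A q).symm)

theorem continuous_conjGL (g : GL (Fin n) R) :
    Continuous[zariskiGL n R, zariskiGL n R] (fun h => g * h * g⁻¹) := by
  letI tm : TopologicalSpace (Matrix (Fin n) (Fin n) R) := zariskiMatrix n R
  letI tg : TopologicalSpace (GL (Fin n) R) := zariskiGL n R
  have hc : Continuous fun A : Matrix (Fin n) (Fin n) R =>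
      (g : Matrix (Fin n) (Fin n) R) * A * ((g⁻¹ : GL (Fin n) R) : Matrix (Fin n) (Fin n) R) :=
    continuous_conjMatrix g
  have he : Continuous (fun h : GL (Fin n) R =>
      ((h : Matrix (Fin n) (Fin n) R), ((h⁻¹ : GL (Fin n) R) : Matrix (Fin n) (Fin n) R))) :=
    continuous_induced_dom
  have key : (fun h : GL (Fin n) R =>
      (((g * h * g⁻¹ : GL (Fin n) R) : Matrix (Fin n) (Fin n) R),
        (((g * h * g⁻¹)⁻¹ : GL (Fin n) R) : Matrix (Fin n) (Fin n) R)))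
      = (Prod.map
          (fun A => (g : Matrix (Fin n) (Fin n) R) * A *
            ((g⁻¹ : GL (Fin n) R) : Matrix (Fin n) (Fin n) R))
          (fun A => (g : Matrix (Fin n) (Fin n) R) * A *
            ((g⁻¹ : GL (Fin n) R) : Matrix (Fin n) (Fin n) R))) ∘
        (fun h : GL (Fin n) R =>
          ((h : Matrix (Fin n) (Fin n) R), ((h⁻¹ : GL (Fin n) R) : Matrix (Fin n) (Fin n) R))) := by
    funext h
    have h2 : (g * h * g⁻¹)⁻¹ = g * h⁻¹ * g⁻¹ := by group
    simp [Prod.map, h2, Units.val_mul, mul_assoc]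
  apply continuous_induced_rng.2
  show Continuous ((fun h : GL (Fin n) R =>
      ((h : Matrix (Fin n) (Fin n) R), ((h⁻¹ : GL (Fin n) R) : Matrix (Fin n) (Fin n) R))) ∘
    (fun h => g * h * g⁻¹))
  have : ((fun h : GL (Fin n) R =>
      ((h : Matrix (Fin n) (Fin n) R), ((h⁻¹ : GL (Fin n) R) : Matrix (Fin n) (Fin n) R))) ∘
    (fun h => g * h * g⁻¹)) = (Prod.map _ _) ∘ _ := key
  rw [this]
  exact (hc.prodMap hc).comp he

end Helpers


section Helpers2

open MvPolynomial Topology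

variable {n : ℕ} {R : Type} [CommRing R]

theorem IsClosedSub_conj {H : Subgroup (GL (Fin n) R)} (hH : IsClosedSub H)
    (g : GL (Fin n) R) : IsClosedSub (Subgroup.map (MulAut.conj g).toMonoidHom H) := by
  letI := zariskiGL n R
  show IsClosed _
  rw [conj_coe_preimage]
  have hcont : Continuous fun x : GL (Fin n) R => g⁻¹ * x * g := by
    have := continuous_conjGL (g := g⁻¹)
    simpa [inv_inv] using this
  exact IsClosed.preimage hcont hH

theorem IsConnectedSub_conj {H : Subgroup (GL (Fin n) R)} (hH : IsConnectedSub H)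
    (g : GL (Fin n) R) : IsConnectedSub (Subgroup.map (MulAut.conj g).toMonoidHom H) := by
  letI := zariskiGL n R
  show IsPreconnected _
  rw [conj_coe_image]
  exact IsPreconnected.image hH _ (continuous_conjGL g).continuousOn

variable {F : Type} [Field F]

theorem IsSemisimpleSub_conj {G₁ : Subgroup (GL (Fin n) F)} (hss : IsSemisimpleSub G₁)
    (g : GL (Fin n) F) : IsSemisimpleSub (Subgroup.map (MulAut.conj g).toMonoidHom G₁) := by
  constructor
  · -- reductive
    intro U hUle hUcl hUconn hUnorm hUuni
    set U₀ := Subgroup.map (MulAut.conj g⁻¹).toMonoidHom U with hU₀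
    have hmemU₀ : ∀ x, x ∈ U₀ ↔ g * x * g⁻¹ ∈ U := fun x => mem_map_conj_inv g x U
    have h₀ : U₀ = ⊥ := by
      apply hss.1 U₀
      · intro x hx
        have := hUle ((hmemU₀ x).1 hx)
        rw [mem_map_conj] at this
        simpa [mul_assoc] using this
      · exact IsClosedSub_conj hUcl g⁻¹
      · exact IsConnectedSub_conj hUconn g⁻¹
      · intro h hh u hu
        rw [hmemU₀]
        have key : g * (h * u * h⁻¹) * g⁻¹ =
            (g * h * g⁻¹) * (g * u * g⁻¹) * (g * h * g⁻¹)⁻¹ := by group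
        rw [key]
        exact hUnorm _ ((mem_map_conj g _ G₁).2 (by simpa [mul_assoc] using hh)) _
          ((hmemU₀ u).1 hu)
      · -- unipotent
        intro u hu
        have hv := hUuni _ ((hmemU₀ u).1 hu)
        set v := g * u * g⁻¹ with hvdef
        have hval : (u : Matrix (Fin n) (Fin n) F) =
            ((g⁻¹ : GL (Fin n) F) : Matrix (Fin n) (Fin n) F) *
              (v : Matrix (Fin n) (Fin n) F) * (g : Matrix (Fin n) (Fin n) F) := by
          have : u = g⁻¹ * v * g := by rw [hvdef]; group
          rw [this]
          simp [Units.val_mul]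
        have hsub : (u : Matrix (Fin n) (Fin n) F) - 1 =
            ((g⁻¹ : GL (Fin n) F) : Matrix (Fin n) (Fin n) F) *
              ((v : Matrix (Fin n) (Fin n) F) - 1) * (g : Matrix (Fin n) (Fin n) F) := by
          rw [hval, Matrix.mul_sub, Matrix.sub_mul, Matrix.mul_one]
          congr 1
          exact (Units.inv_mul g).symm
        rw [hsub, Units.conj_pow', hv]
        simp
    -- conclude U = ⊥
    rw [eq_bot_iff]
    intro u hu
    have : g⁻¹ * u * g ∈ U₀ := (hmemU₀ _).2 (by simpa [mul_assoc] using hu)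
    rw [h₀, Subgroup.mem_bot] at this
    have : u = 1 := by
      have := congrArg (fun x => g * x * g⁻¹) this
      simpa [mul_assoc] using this
    simp [this]
  · -- finite center
    have himg : {x : GL (Fin n) F | x ∈ Subgroup.map (MulAut.conj g).toMonoidHom G₁ ∧
        ∀ h ∈ Subgroup.map (MulAut.conj g).toMonoidHom G₁, Commute x h} =
        (fun y => g * y * g⁻¹) ''
          {y : GL (Fin n) F | y ∈ G₁ ∧ ∀ h ∈ G₁, Commute y h} := by
      ext x
      constructor
      · rintro ⟨hx, hcomm⟩
        refine ⟨g⁻¹ * x * g, ⟨(mem_map_conj g x G₁).1 hx, fun h hh => ?_⟩, by group⟩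
        have := hcomm (g * h * g⁻¹) ((mem_map_conj g _ G₁).2 (by simpa [mul_assoc] using hh))
        have h2 := commute_conj g⁻¹ this
        simpa [mul_assoc] using h2
      · rintro ⟨y, ⟨hy, hcomm⟩, rfl⟩
        refine ⟨(mem_map_conj g _ G₁).2 (by simpa [mul_assoc] using hy), fun h hh => ?_⟩
        have hh' := (mem_map_conj g h _).1 hh
        have := commute_conj g (hcomm _ hh')
        have hrw : g * (g⁻¹ * h * g) * g⁻¹ = h := by group
        rwa [hrw] at this
    rw [himg]
    exact (hss.2).image _

theorem IrreducibleOn_conj {G₁ : Subgroup (GL (Fin n) F)} (hirr : IrreducibleOn G₁)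
    (g : GL (Fin n) F) : IrreducibleOn (Subgroup.map (MulAut.conj g).toMonoidHom G₁) := by
  intro W hW
  set gm : Matrix (Fin n) (Fin n) F := (g : Matrix (Fin n) (Fin n) F) with hgm
  set gm' : Matrix (Fin n) (Fin n) F := ((g⁻¹ : GL (Fin n) F) : Matrix (Fin n) (Fin n) F)
    with hgm'
  have hgg' : gm * gm' = 1 := Units.mul_inv g
  have hg'g : gm' * gm = 1 := Units.inv_mul g
  set W₀ := Submodule.map (Matrix.mulVecLin gm') W with hW₀def
  have hW₀ : ∀ h ∈ G₁, ∀ w ∈ W₀, (h : Matrix (Fin n) (Fin n) F).mulVec w ∈ W₀ := by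
    rintro h hh w hw
    obtain ⟨w', hw', rfl⟩ := hw
    have hkey : (h : Matrix (Fin n) (Fin n) F).mulVec (Matrix.mulVecLin gm' w') =
        Matrix.mulVecLin gm' (((g * h * g⁻¹ : GL (Fin n) F) :
          Matrix (Fin n) (Fin n) F).mulVec w') := by
      simp only [Matrix.mulVecLin_apply, Matrix.mulVec_mulVec, Units.val_mul]
      have hmat : gm' * ((g : Matrix (Fin n) (Fin n) F) * (h : Matrix (Fin n) (Fin n) F) *
          ((g⁻¹ : GL (Fin n) F) : Matrix (Fin n) (Fin n) F)) =
          (h : Matrix (Fin n) (Fin n) F) * gm' := by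
        simp only [← Matrix.mul_assoc]
        rw [show gm' * (g : Matrix (Fin n) (Fin n) F) = 1 from hg'g, one_mul]
      rw [hmat]
    rw [hkey]
    exact Submodule.mem_map_of_mem
      (hW _ ((mem_map_conj g _ G₁).2 (by simpa [mul_assoc] using hh)) _ hw')
  rcases hirr W₀ hW₀ with h0 | h0
  · left
    rw [eq_bot_iff]
    intro w hw
    have : Matrix.mulVecLin gm' w ∈ W₀ := Submodule.mem_map_of_mem hw
    rw [h0, Submodule.mem_bot] at this
    have hww : w = gm.mulVec (gm'.mulVec w) := by
      rw [Matrix.mulVec_mulVec, hgg', Matrix.one_mulVec]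
    rw [Submodule.mem_bot, hww]
    simp only [Matrix.mulVecLin_apply] at this
    rw [this, Matrix.mulVec_zero]
  · right
    rw [eq_top_iff]
    intro v _
    have hv : gm'.mulVec v ∈ W₀ := h0 ▸ Submodule.mem_top
    obtain ⟨w, hw, hwe⟩ := hv
    have : w = v := by
      have := congrArg gm.mulVec hwe
      simp only [Matrix.mulVecLin_apply, Matrix.mulVec_mulVec, hgg', Matrix.one_mulVec] at this
      exact this
    rwa [← this]

end Helpers2


section Helpers3

open MvPolynomial Topology

variable {n : ℕ} {F : Type} [Field F]

theorem IsSubtorus_conj {T' : Subgroup (GL (Fin n) F)} (hT' : IsSubtorus T')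
    (g : GL (Fin n) F) : IsSubtorus (Subgroup.map (MulAut.conj g).toMonoidHom T') := by
  obtain ⟨hcl, hconn, K, instK, instA, u, hu⟩ := hT'
  refine ⟨IsClosedSub_conj hcl g, IsConnectedSub_conj hconn g, K, instK, instA,
    u * (mapGL (algebraMap F K) g)⁻¹, fun t ht => ?_⟩
  have hv : g⁻¹ * t * g ∈ T' := (mem_map_conj g t T').1 ht
  have hkey : u * (mapGL (algebraMap F K) g)⁻¹ * mapGL (algebraMap F K) t *
      (u * (mapGL (algebraMap F K) g)⁻¹)⁻¹ =
      u * mapGL (algebraMap F K) (g⁻¹ * t * g) * u⁻¹ := by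
    simp only [_root_.map_mul, _root_.map_inv]
    group
  rw [hkey]
  exact hu _ hv

set_option maxHeartbeats 1000000 in
theorem IsMaximalTorusOf_conj {T G₁ : Subgroup (GL (Fin n) F)}
    (hmax : IsMaximalTorusOf T G₁) {g : GL (Fin n) F} (hg : g ∈ Subgroup.normalizer (T : Set (GL (Fin n) F))) :
    IsMaximalTorusOf T (Subgroup.map (MulAut.conj g).toMonoidHom G₁) := by
  obtain ⟨htorus, hle, hmaximal⟩ := hmax
  have hnorm : ∀ t, t ∈ T ↔ g * t * g⁻¹ ∈ T := Subgroup.mem_normalizer_iff.1 hg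
  refine ⟨htorus, ?_, ?_⟩
  · intro t ht
    rw [mem_map_conj]
    exact hle ((hnorm (g⁻¹ * t * g)).2 (by simpa [mul_assoc] using ht))
  · intro T' hT' hT'le hTle
    have hmem'' : ∀ x, x ∈ Subgroup.map (MulAut.conj g⁻¹).toMonoidHom T' ↔
        g * x * g⁻¹ ∈ T' := fun x => mem_map_conj_inv g x T'
    have h2 : Subgroup.map (MulAut.conj g⁻¹).toMonoidHom T' = T := by
      refine hmaximal _ (IsSubtorus_conj hT' g⁻¹) ?_ ?_
      · intro x hx
        have := hT'le ((hmem'' x).1 hx)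
        rw [mem_map_conj] at this
        simpa [mul_assoc] using this
      · intro t ht
        exact (hmem'' t).2 (hTle ((hnorm t).1 ht))
    refine le_antisymm ?_ hTle
    intro t' ht'
    have h3 : g⁻¹ * t' * g ∈ Subgroup.map (MulAut.conj g⁻¹).toMonoidHom T' :=
      (hmem'' (g⁻¹ * t' * g)).2 (by simpa [mul_assoc] using ht')
    rw [h2] at h3
    have h4 := (hnorm (g⁻¹ * t' * g)).1 h3
    simpa [mul_assoc] using h4

theorem lieAlgOf_conj {G₁ : Subgroup (GL (Fin n) F)} {A : Matrix (Fin n) (Fin n) F}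
    (hA : A ∈ lieAlgOf G₁) (g : GL (Fin n) F) :
    (g : Matrix (Fin n) (Fin n) F) * A * ((g⁻¹ : GL (Fin n) F) : Matrix (Fin n) (Fin n) F) ∈
      lieAlgOf (Subgroup.map (MulAut.conj g).toMonoidHom G₁) := by
  set gm : Matrix (Fin n) (Fin n) F := (g : Matrix (Fin n) (Fin n) F) with hgm
  set gm' : Matrix (Fin n) (Fin n) F := ((g⁻¹ : GL (Fin n) F) : Matrix (Fin n) (Fin n) F)
    with hgm'
  have hgg' : gm * gm' = 1 := Units.mul_inv g
  intro p hp
  -- the substituted polynomial lies in the vanishing ideal of G₁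
  have hq : MvPolynomial.bind₁ (conjPoly gm gm') p ∈
      vanishingIdealGL (G₁ : Set (GL (Fin n) F)) := by
    simp only [vanishingIdealGL, Ideal.mem_iInf, RingHom.mem_ker]
    intro h hh
    rw [eval_bind₁']
    have heval : (fun i : Fin n × Fin n =>
        MvPolynomial.eval (fun q : Fin n × Fin n => (h : Matrix (Fin n) (Fin n) F) q.1 q.2)
          (conjPoly gm gm' i)) =
        fun q : Fin n × Fin n =>
          ((g * h * g⁻¹ : GL (Fin n) F) : Matrix (Fin n) (Fin n) F) q.1 q.2 := by
      funext i
      rw [eval_conjPoly, Units.val_mul, Units.val_mul]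
    rw [heval]
    have hmem' : g * h * g⁻¹ ∈ Subgroup.map (MulAut.conj g).toMonoidHom G₁ :=
      (mem_map_conj g _ G₁).2 (by simpa [mul_assoc] using hh)
    simp only [vanishingIdealGL, Ideal.mem_iInf, RingHom.mem_ker] at hp
    exact hp _ hmem'
  have h0 := hA _ hq
  set f := algebraMap F (DualNumber F) with hf
  rw [map_bind₁, eval_bind₁'] at h0
  set N : Matrix (Fin n) (Fin n) (DualNumber F) := Matrix.of fun k l =>
    f ((1 : Matrix (Fin n) (Fin n) F) k l) + DualNumber.eps * f (A k l) with hN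
  have hNmat : N = (1 : Matrix (Fin n) (Fin n) (DualNumber F)) +
      (DualNumber.eps : DualNumber F) • (A.map f) := by
    funext k l
    simp only [hN, Matrix.of_apply, Matrix.add_apply, Matrix.smul_apply, Matrix.map_apply,
      smul_eq_mul]
    congr 1
    by_cases hkl : k = l
    · subst hkl; simp
    · simp [Matrix.one_apply_ne hkl]
  have hgoal : gm.map f * N * gm'.map f =
      (1 : Matrix (Fin n) (Fin n) (DualNumber F)) +
        (DualNumber.eps : DualNumber F) • ((gm * A * gm').map f) := by
    rw [hNmat, Matrix.mul_add, Matrix.add_mul]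
    congr 1
    · rw [Matrix.mul_one, ← Matrix.map_mul, hgg', Matrix.map_one f f.map_zero f.map_one]
    · rw [Matrix.mul_smul, Matrix.smul_mul (DualNumber.eps : DualNumber F) (gm.map f * A.map f) (gm'.map f),
        ← Matrix.map_mul, ← Matrix.map_mul]
  have hfun : (fun i : Fin n × Fin n =>
      MvPolynomial.eval (fun q : Fin n × Fin n =>
        f ((1 : Matrix (Fin n) (Fin n) F) q.1 q.2) + DualNumber.eps * f (A q.1 q.2))
        (MvPolynomial.map f (conjPoly gm gm' i))) =
      fun q : Fin n × Fin n =>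
        f ((1 : Matrix (Fin n) (Fin n) F) q.1 q.2) +
          DualNumber.eps * f ((gm * A * gm') q.1 q.2) := by
    funext i
    have hNfun : (fun q : Fin n × Fin n =>
        f ((1 : Matrix (Fin n) (Fin n) F) q.1 q.2) + DualNumber.eps * f (A q.1 q.2)) =
        fun q : Fin n × Fin n => N q.1 q.2 := rfl
    rw [hNfun, map_conjPoly, eval_conjPoly, hgoal]
    simp only [Matrix.add_apply, Matrix.smul_apply, Matrix.map_apply, smul_eq_mul]
    congr 1
    by_cases hkl : i.1 = i.2
    · rw [hkl]; simp [Matrix.one_apply_eq]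
    · simp [Matrix.one_apply_ne hkl]
  rw [hfun] at h0
  exact h0

end Helpers3



section Helpers4

open MvPolynomial Topology

variable {n : ℕ}

/-- Diagonal matrix entries multiply entrywise on the diagonal. -/
theorem diag_mul_apply {R : Type} [CommRing R] {A B : Matrix (Fin n) (Fin n) R}
    (hA : A.IsDiag) (i : Fin n) : (A * B) i i = A i i * B i i := by
  rw [Matrix.mul_apply]
  rw [Finset.sum_eq_single i]
  · intro k _ hk
    rw [hA (Ne.symm hk), zero_mul]
  · intro h; exact absurd (Finset.mem_univ i) h

/-- If two finite families of monoid homomorphisms into `ℂ` have equal pointwise sums,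
then they agree up to a permutation of the index set. -/
theorem exists_perm_of_sum_eq {M : Type} [Monoid M] (χ e : Fin n → (M →* ℂ))
    (h : ∀ t : M, ∑ i, χ i t = ∑ i, e i t) :
    ∃ σ : Equiv.Perm (Fin n), ∀ i, χ i = e (σ i) := by
  classical
  have hcard : ∀ f : M →* ℂ,
      (Finset.univ.filter fun i => χ i = f).card =
        (Finset.univ.filter fun i => e i = f).card := by
    set c : (M →* ℂ) →₀ ℂ :=
      (∑ i, Finsupp.single (χ i) 1) - (∑ i, Finsupp.single (e i) 1) with hc
    have hc0 : Finsupp.linearCombination ℂ (fun f : M →* ℂ => (f : M → ℂ)) c = 0 := by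
      rw [hc, map_sub, map_sum, map_sum]
      simp only [Finsupp.linearCombination_single, one_smul]
      funext t
      simp only [Pi.sub_apply, Finset.sum_apply, Pi.zero_apply]
      rw [sub_eq_zero]
      simpa using h t
    have hczero : c = 0 :=
      linearIndependent_iff.1 (linearIndependent_monoidHom M ℂ) c hc0
    intro f
    have happ := congrArg (fun l : (M →* ℂ) →₀ ℂ => l f) hczero
    simp only [hc, Finsupp.coe_sub, Pi.sub_apply, Finsupp.coe_zero, Pi.zero_apply,
      sub_eq_zero] at happ
    have h1 : (∑ i, Finsupp.single (χ i) (1 : ℂ)) f =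
        ((Finset.univ.filter fun i => χ i = f).card : ℂ) := by
      rw [Finsupp.finset_sum_apply]
      simp only [Finsupp.single_apply]
      rw [Finset.sum_boole]
    have h2 : (∑ i, Finsupp.single (e i) (1 : ℂ)) f =
        ((Finset.univ.filter fun i => e i = f).card : ℂ) := by
      rw [Finsupp.finset_sum_apply]
      simp only [Finsupp.single_apply]
      rw [Finset.sum_boole]
    rw [h1, h2] at happ
    exact_mod_cast happ
  have hfib : ∀ f : M →* ℂ, Nonempty ({i // χ i = f} ≃ {i // e i = f}) := by
    intro f
    refine ⟨Fintype.equivOfCardEq ?_⟩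
    rw [Fintype.card_subtype, Fintype.card_subtype]
    exact hcard f
  let τ : ∀ f : M →* ℂ, {i // χ i = f} ≃ {i // e i = f} := fun f => (hfib f).some
  exact ⟨Equiv.ofFiberEquiv τ, fun i => (Equiv.ofFiberEquiv_map τ i).symm⟩

end Helpers4


section Helpers5

variable {n : ℕ}

/-- The `j`-th diagonal character of a diagonal torus. -/
def diagCharHom (T : Subgroup (GL (Fin n) ℂ))
    (hdiag : ∀ t ∈ T, ((t : Matrix (Fin n) (Fin n) ℂ)).IsDiag) (j : Fin n) : ↥T →* ℂ where
  toFun t := ((t : GL (Fin n) ℂ) : Matrix (Fin n) (Fin n) ℂ) j j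
  map_one' := by simp
  map_mul' t s := by
    show (((t * s : ↥T) : GL (Fin n) ℂ) : Matrix (Fin n) (Fin n) ℂ) j j =
      ((t : GL (Fin n) ℂ) : Matrix (Fin n) (Fin n) ℂ) j j *
        ((s : GL (Fin n) ℂ) : Matrix (Fin n) (Fin n) ℂ) j j
    rw [show ((t * s : ↥T) : GL (Fin n) ℂ) = (t : GL (Fin n) ℂ) * (s : GL (Fin n) ℂ) from rfl,
      Units.val_mul]
    exact diag_mul_apply (hdiag _ t.2) j

/-- The `i`-th diagonal character of the torus twisted by conjugation by a normalizing
element. -/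
def conjCharHom (T : Subgroup (GL (Fin n) ℂ))
    (hdiag : ∀ t ∈ T, ((t : Matrix (Fin n) (Fin n) ℂ)).IsDiag) (g : GL (Fin n) ℂ)
    (hg : g ∈ Subgroup.normalizer (T : Set (GL (Fin n) ℂ))) (i : Fin n) : ↥T →* ℂ where
  toFun t := ((g⁻¹ * (t : GL (Fin n) ℂ) * g : GL (Fin n) ℂ) : Matrix (Fin n) (Fin n) ℂ) i i
  map_one' := by simp
  map_mul' t s := by
    have hmem1 : ∀ x ∈ T, g⁻¹ * x * g ∈ T := fun x hx =>
      (Subgroup.mem_normalizer_iff.1 hg (g⁻¹ * x * g)).2 (by simpa [mul_assoc] using hx)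
    have h1 : g⁻¹ * ((t * s : ↥T) : GL (Fin n) ℂ) * g =
        (g⁻¹ * (t : GL (Fin n) ℂ) * g) * (g⁻¹ * (s : GL (Fin n) ℂ) * g) := by
      rw [show ((t * s : ↥T) : GL (Fin n) ℂ) =
        (t : GL (Fin n) ℂ) * (s : GL (Fin n) ℂ) from rfl]
      group
    show ((g⁻¹ * ((t * s : ↥T) : GL (Fin n) ℂ) * g : GL (Fin n) ℂ) :
        Matrix (Fin n) (Fin n) ℂ) i i =
      ((g⁻¹ * (t : GL (Fin n) ℂ) * g : GL (Fin n) ℂ) : Matrix (Fin n) (Fin n) ℂ) i i *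
        ((g⁻¹ * (s : GL (Fin n) ℂ) * g : GL (Fin n) ℂ) : Matrix (Fin n) (Fin n) ℂ) i i
    rw [h1, Units.val_mul]
    exact diag_mul_apply (hdiag _ (hmem1 _ t.2)) i

end Helpers5


/-- Let `G₁ ⊆ GL n ℂ` be a connected semisimple subgroup acting
irreducibly on `ℂⁿ`, with (diagonal) maximal torus `T` and root set `R`.  Suppose, for
every `g` in the normalizer `N_{GL_n(ℂ)}(T)`, the pair `(G₁, g G₁ g⁻¹)` (sharing the
formal character `T`) avoids the four exceptional coincidences of Larsen–Pink (the
exceptional coincidences, which involve spin and other specific representations, are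
abstracted as a predicate `ExceptLP`, and the Larsen–Pink theorem itself is the
hypothesis `hLP`).  Then `g · R = R` for all `g ∈ N_{GL_n(ℂ)}(T)`: the invariance of
roots condition holds. -/
theorem stmt17 {n : ℕ}
    (G₁ T : Subgroup (GL (Fin n) ℂ))
    (hclosed : IsClosedSub G₁) (hconn : IsConnectedSub G₁) (hss : IsSemisimpleSub G₁)
    (hirr : IrreducibleOn G₁)
    (hmax : IsMaximalTorusOf T G₁)
    (hdiag : ∀ t ∈ T, ((t : Matrix (Fin n) (Fin n) ℂ)).IsDiag)
    -- the Larsen–Pink exceptional coincidences, abstracted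
    (ExceptLP : Subgroup (GL (Fin n) ℂ) → Subgroup (GL (Fin n) ℂ) → Prop)
    -- the Larsen–Pink theorem: two connected semisimple irreducible subgroups with the
    -- same formal character have identical root sets unless an exception occurs
    (hLP : ∀ H H' : Subgroup (GL (Fin n) ℂ),
      IsClosedSub H → IsConnectedSub H → IsSemisimpleSub H → IrreducibleOn H →
      IsClosedSub H' → IsConnectedSub H' → IsSemisimpleSub H' → IrreducibleOn H' →
      IsMaximalTorusOf T H → IsMaximalTorusOf T H' → ¬ ExceptLP H H' →
      ∀ m : Fin n → ℤ, (IsRootVec H T m ↔ IsRootVec H' T m))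
    -- the avoidance hypothesis
    (havoid : ∀ g ∈ Subgroup.normalizer (T : Set (GL (Fin n) ℂ)),
      ¬ ExceptLP G₁ (Subgroup.map (MulAut.conj g).toMonoidHom G₁)) :
    ∀ g ∈ Subgroup.normalizer (T : Set (GL (Fin n) ℂ)), ∀ m : Fin n → ℤ, IsRootVec G₁ T m →
      ∃ m' : Fin n → ℤ, IsRootVec G₁ T m' ∧
        ∀ t ∈ T, chiVec m' t = chiVec m (g⁻¹ * t * g) := by
  intro g hg m hm
  classical
  have hnorm : ∀ t, t ∈ T ↔ g * t * g⁻¹ ∈ T := Subgroup.mem_normalizer_iff.1 hg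
  have hmem1 : ∀ t ∈ T, g⁻¹ * t * g ∈ T := fun t ht =>
    (hnorm (g⁻¹ * t * g)).2 (by simpa [mul_assoc] using ht)
  have hmem2 : ∀ t ∈ T, g * t * g⁻¹ ∈ T := fun t ht => (hnorm t).1 ht
  -- the permutation of diagonal characters induced by conjugation
  have hsum : ∀ t : ↥T, ∑ i, conjCharHom T hdiag g hg i t = ∑ j, diagCharHom T hdiag j t := by
    intro t
    have htr : ∀ M : Matrix (Fin n) (Fin n) ℂ, ∑ i, M i i = M.trace := by
      intro M; simp [Matrix.trace, Matrix.diag]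
    have h1 : ∑ i, conjCharHom T hdiag g hg i t =
        ((g⁻¹ * (t : GL (Fin n) ℂ) * g : GL (Fin n) ℂ) :
          Matrix (Fin n) (Fin n) ℂ).trace := by
      rw [← htr]
      exact Finset.sum_congr rfl fun i _ => rfl
    have h2 : ∑ j, diagCharHom T hdiag j t =
        (((t : GL (Fin n) ℂ)) : Matrix (Fin n) (Fin n) ℂ).trace := by
      rw [← htr]
      exact Finset.sum_congr rfl fun i _ => rfl
    rw [h1, h2, Units.val_mul, Units.val_mul, Matrix.trace_mul_cycle, ← Units.val_mul,
      mul_inv_cancel, Units.val_one, one_mul]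
  obtain ⟨σ, hσ⟩ := exists_perm_of_sum_eq _ _ hsum
  have hχval : ∀ t : GL (Fin n) ℂ, t ∈ T → ∀ i : Fin n,
      ((g⁻¹ * t * g : GL (Fin n) ℂ) : Matrix (Fin n) (Fin n) ℂ) i i =
        (t : Matrix (Fin n) (Fin n) ℂ) (σ i) (σ i) := by
    intro t ht i
    have := congrArg (fun f : ↥T →* ℂ => f ⟨t, ht⟩) (hσ i)
    simpa [conjCharHom, diagCharHom] using this
  set m' : Fin n → ℤ := fun j => m (σ.symm j) with hm'def
  have hchar : ∀ t ∈ T, chiVec m' t = chiVec m (g⁻¹ * t * g) := by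
    intro t ht
    unfold chiVec
    rw [← Equiv.prod_comp σ
      (fun j => ((t : Matrix (Fin n) (Fin n) ℂ) j j) ^ (m' j))]
    refine Finset.prod_congr rfl fun i _ => ?_
    rw [hm'def]
    simp only [Equiv.symm_apply_apply]
    rw [hχval t ht i]
  -- the conjugate subgroup and its properties
  set G' := Subgroup.map (MulAut.conj g).toMonoidHom G₁ with hG'def
  have hG'cl : IsClosedSub G' := IsClosedSub_conj hclosed g
  have hG'conn : IsConnectedSub G' := IsConnectedSub_conj hconn g
  have hG'ss : IsSemisimpleSub G' := IsSemisimpleSub_conj hss g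
  have hG'irr : IrreducibleOn G' := IrreducibleOn_conj hirr g
  have hG'max : IsMaximalTorusOf T G' := IsMaximalTorusOf_conj hmax hg
  -- `m'` is a root of the conjugate subgroup
  obtain ⟨⟨t₀, ht₀, ht₀ne⟩, A, hA, hAne, hAcomm⟩ := hm
  set gm : Matrix (Fin n) (Fin n) ℂ := (g : Matrix (Fin n) (Fin n) ℂ) with hgm
  set gm' : Matrix (Fin n) (Fin n) ℂ := ((g⁻¹ : GL (Fin n) ℂ) : Matrix (Fin n) (Fin n) ℂ)
    with hgm'
  have hgg' : gm * gm' = 1 := Units.mul_inv g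
  have hg'g : gm' * gm = 1 := Units.inv_mul g
  have hroot' : IsRootVec G' T m' := by
    refine ⟨⟨g * t₀ * g⁻¹, hmem2 t₀ ht₀, ?_⟩, gm * A * gm', lieAlgOf_conj hA g, ?_, ?_⟩
    · rw [hchar _ (hmem2 t₀ ht₀)]
      rw [show g⁻¹ * (g * t₀ * g⁻¹) * g = t₀ by group]
      exact ht₀ne
    · intro h0
      apply hAne
      have h1 := congrArg (fun M => gm' * M * gm) h0
      simp only [Matrix.mul_zero, Matrix.zero_mul] at h1
      rw [show gm' * (gm * A * gm') * gm = (gm' * gm) * A * (gm' * gm) by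
        simp only [Matrix.mul_assoc], hg'g, one_mul, Matrix.mul_one] at h1
      exact h1
    · intro t ht
      have hs : g⁻¹ * t * g ∈ T := hmem1 t ht
      have hcm := hAcomm _ hs
      set tm : Matrix (Fin n) (Fin n) ℂ := (t : Matrix (Fin n) (Fin n) ℂ) with htm
      set sm : Matrix (Fin n) (Fin n) ℂ :=
        ((g⁻¹ * t * g : GL (Fin n) ℂ) : Matrix (Fin n) (Fin n) ℂ) with hsm
      have hsm' : sm = gm' * tm * gm := by rw [hsm, Units.val_mul, Units.val_mul]
      have h1 : tm * (gm * A * gm') = gm * (sm * A) * gm' := by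
        rw [hsm']
        simp only [← Matrix.mul_assoc]
        rw [show gm * gm' = 1 from hgg', one_mul]
      have h2 : gm * (chiVec m (g⁻¹ * t * g) • (A * sm)) * gm' =
          chiVec m (g⁻¹ * t * g) • (gm * A * gm' * tm) := by
        rw [Matrix.mul_smul, Matrix.smul_mul]
        congr 1
        rw [hsm']
        simp only [← Matrix.mul_assoc]
        rw [Matrix.mul_assoc (gm * A * gm' * tm) gm gm', hgg', Matrix.mul_one]
      rw [hchar t ht, h1, hcm, h2]
  -- apply the Larsen–Pink theorem
  have hiff := hLP G₁ G' hclosed hconn hss hirr hG'cl hG'conn hG'ss hG'irr hmax hG'max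
    (havoid g hg) m'
  refine ⟨m', hiff.2 hroot', hchar⟩


end
end
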